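/- arXiv:1802.08641 — 2 statements merged into one kernel-verified Lean document; each statement's English description precedes it below -/
import Mathlib

section
/- Let Θ be a finite set with ⊥ ∉ Θ and let π be a path expression over Γ. There exists a CFM over P and the alphabet Σ × (Θ × (Θ ∪ {⊥})) whose language is exactly the set of extended MSCs (M, ξ), with ξ(e) = (ξ₁(e), ξ₂(e)) ∈ Θ × (Θ ∪ {⊥}), such that for all events e ∈ E, ξ₂(e) = ξ₁(last_π(e)), where ξ₁(⊥) := ⊥. -/
namespace Gossip

/-- Events extended with bottom and top elements. -/
inductive ExtEv (E : Type) : Type where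
  | bot : ExtEv E
  | evt (e : E) : ExtEv E
  | top : ExtEv E

/-- A message sequence chart (MSC) over processes `P`, alphabet `A`,
with (finite, nonempty) set of events `E`. -/
structure MSC (P A E : Type) : Type where
  fintypeE : Fintype E
  nonemptyE : Nonempty E
  loc : E → P
  lab : E → A
  /-- process successor relation `→` -/
  next : E → E → Prop
  /-- message relation `◁` -/
  msg : E → E → Prop
  next_loc : ∀ {e f : E}, next e f → loc e = loc f
  next_irrefl : ∀ e : E, ¬ next e e
  next_right_unique : ∀ {e f f' : E}, next e f → next e f' → f = f'
  next_left_unique : ∀ {e e' f : E}, next e f → next e' f → e = e'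
  next_total : ∀ e f : E, loc e = loc f →
      Relation.ReflTransGen next e f ∨ Relation.ReflTransGen next f e
  msg_loc : ∀ {e f : E}, msg e f → loc e ≠ loc f
  /-- every event belongs to at most one pair of `◁` -/
  msg_unique : ∀ {e f e' f' : E}, msg e f → msg e' f' →
      (e = e' ∨ e = f' ∨ f = e' ∨ f = f') → e = e' ∧ f = f'
  fifo : ∀ {e f e' f' : E}, msg e f → msg e' f' → loc e = loc e' → loc f = loc f' →
      (Relation.ReflTransGen next e e' ↔ Relation.ReflTransGen next f f')
  /-- `≤ = (→ ∪ ◁)*` is a partial order -/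
  causal_antisymm : ∀ {e f : E},
      Relation.ReflTransGen (fun x y => next x y ∨ msg x y) e f →
      Relation.ReflTransGen (fun x y => next x y ∨ msg x y) f e → e = f

namespace MSC

variable {P A E B : Type}

/-- the causal order `≤ = (→ ∪ ◁)*` -/
def le (M : MSC P A E) : E → E → Prop :=
  Relation.ReflTransGen (fun x y => M.next x y ∨ M.msg x y)

/-- the strict causal order `<` -/
def lt (M : MSC P A E) (e f : E) : Prop := M.le e f ∧ e ≠ f

/-- `→*` -/
def nextStar (M : MSC P A E) : E → E → Prop := Relation.ReflTransGen M.next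

/-- the causal order extended to `E ∪ {⊥,⊤}` with `⊥ < e < ⊤` -/
def extLe (M : MSC P A E) : ExtEv E → ExtEv E → Prop
  | .bot, _ => True
  | _, .top => True
  | .evt e, .evt f => M.le e f
  | _, _ => False

def extLt (M : MSC P A E) (x y : ExtEv E) : Prop := M.extLe x y ∧ x ≠ y

/-- replace the labelling of an MSC (e.g. to pair it with an extra labelling) -/
def relabel (M : MSC P A E) (μ : E → B) : MSC P B E where
  fintypeE := M.fintypeE
  nonemptyE := M.nonemptyE
  loc := M.loc
  lab := μ
  next := M.next
  msg := M.msg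
  next_loc := M.next_loc
  next_irrefl := M.next_irrefl
  next_right_unique := M.next_right_unique
  next_left_unique := M.next_left_unique
  next_total := M.next_total
  msg_loc := M.msg_loc
  msg_unique := M.msg_unique
  fifo := M.fifo
  causal_antisymm := M.causal_antisymm

end MSC

/-- letters of path expressions: `→`, `→*`, `p▷q`, `⟨a⟩` -/
inductive PathLetter (P A : Type) : Type where
  | next : PathLetter P A
  | nextStar : PathLetter P A
  | msg (p q : P) : PathLetter P A
  | lab (a : A) : PathLetter P A

/-- path expressions: finite words over `Γ` -/
abbrev PathExpr (P A : Type) := List (PathLetter P A)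

variable {P A E : Type}

def letterSem (M : MSC P A E) : PathLetter P A → E → E → Prop
  | .next => M.next
  | .nextStar => M.nextStar
  | .msg p q => fun e f => M.loc e = p ∧ M.loc f = q ∧ M.msg e f
  | .lab a => fun e f => e = f ∧ M.lab e = a

/-- `⟦π⟧` -/
def pathSem (M : MSC P A E) : PathExpr P A → E → E → Prop
  | [] => fun e f => e = f
  | l :: π => fun e g => ∃ f, letterSem M l e f ∧ pathSem M π f g

def letterComp : PathLetter P A → P → P → Prop
  | .msg p q => fun x y => x = p ∧ y = q
  | _ => fun x y => x = y

/-- `Comp(π)`; `π ∈ Π_{p,q}` iff `pcomp π p q` -/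
def pcomp : PathExpr P A → P → P → Prop
  | [] => fun x y => x = y
  | l :: π => fun x z => ∃ y, letterComp l x y ∧ pcomp π y z

/-- `IsLast M π e x` holds iff `x = last_π(e)` (with `x = ⊥` iff no `π`-path into `e`). -/
def IsLast (M : MSC P A E) (π : PathExpr P A) (e : E) : ExtEv E → Prop
  | .bot => ∀ f, ¬ pathSem M π f e
  | .evt g => pathSem M π g e ∧ ∀ f, pathSem M π f e → M.le f g
  | .top => False

/-- `IsFirst M π e x` holds iff `x = first_π(e)` (with `x = ⊤` iff no `π`-path out of `e`). -/
def IsFirst (M : MSC P A E) (π : PathExpr P A) (e : E) : ExtEv E → Prop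
  | .top => ∀ f, ¬ pathSem M π e f
  | .evt g => pathSem M π e g ∧ ∀ f, pathSem M π e f → M.le g f
  | .bot => False

/-- `IsFa M π π' e x` holds iff `x = f_{π,π'}(e) = first_{π'}(last_π(e))`, with
`first_{π'}(⊥) := ⊥`. -/
def IsFa (M : MSC P A E) (π π' : PathExpr P A) (e : E) (x : ExtEv E) : Prop :=
  (IsLast M π e ExtEv.bot ∧ x = ExtEv.bot) ∨
    ∃ g, IsLast M π e (ExtEv.evt g) ∧ IsFirst M π' g x

/-- `IsLastProc M p e x` holds iff `x = last_p(e)`, the maximal event of process `p`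
strictly below `e` (`⊥` if none). -/
def IsLastProc (M : MSC P A E) (p : P) (e : E) : ExtEv E → Prop
  | .bot => ∀ f, M.loc f = p → ¬ M.lt f e
  | .evt g => M.loc g = p ∧ M.lt g e ∧ ∀ f, M.loc f = p → M.lt f e → M.le f g
  | .top => False

/-- `π ≼_e π'`, i.e. `last_π(e) ≤ last_{π'}(e)` -/
def ple (M : MSC P A E) (π π' : PathExpr P A) (e : E) : Prop :=
  ∃ x y, IsLast M π e x ∧ IsLast M π' e y ∧ M.extLe x y

def gossipSuffix : P → List P → PathExpr P A
  | _, [] => []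
  | p, q :: w => PathLetter.msg p q :: PathLetter.nextStar :: gossipSuffix q w

/-- `π_w` for `w = p :: rest` -/
def gossipExpr (p : P) (w : List P) : PathExpr P A :=
  match w with
  | [] => [PathLetter.next, PathLetter.nextStar]
  | _ :: _ => PathLetter.nextStar :: gossipSuffix p w

/-- `π ∈ Π^gossip` -/
def IsGossip (π : PathExpr P A) : Prop :=
  ∃ (p : P) (w : List P), (p :: w).Nodup ∧ π = gossipExpr p w

/-- actions of a CFM transition -/
inductive CAct (P A Msg : Type) : Type where
  | internal (a : A) : CAct P A Msg
  | send (a : A) (m : Msg) (q : P) : CAct P A Msg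
  | recv (a : A) (m : Msg) (q : P) : CAct P A Msg

def CAct.labelOf {P A Msg : Type} : CAct P A Msg → A
  | .internal a => a
  | .send a _ _ => a
  | .recv a _ _ => a

/-- a communicating finite-state machine over `P` and `A` -/
structure CFM (P A : Type) : Type 1 where
  Msg : Type
  msgFin : Fintype Msg
  S : Type
  sFin : Fintype S
  ι : P → S
  Δ : P → Set (S × CAct P A Msg × S)
  Acc : Set (P → S)
  wf_send : ∀ p s a m q s', (s, CAct.send a m q, s') ∈ Δ p → q ≠ p
  wf_recv : ∀ p s a m q s', (s, CAct.recv a m q, s') ∈ Δ p → q ≠ p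

namespace CFM

variable {P A E : Type}

/-- `ρ` is a run of the CFM `C` on the MSC `M` -/
def IsRun (C : CFM P A) (M : MSC P A E) (ρ : E → C.S × CAct P A C.Msg × C.S) : Prop :=
  (∀ e, ρ e ∈ C.Δ (M.loc e)) ∧
  (∀ e, ((ρ e).2.1).labelOf = M.lab e) ∧
  (∀ e, (¬ ∃ f, M.next f e) → (ρ e).1 = C.ι (M.loc e)) ∧
  (∀ e f, M.next e f → (ρ e).2.2 = (ρ f).1) ∧
  (∀ e, (¬ ∃ f, M.msg e f) → (¬ ∃ f, M.msg f e) → ∃ a, (ρ e).2.1 = CAct.internal a) ∧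
  (∀ e f, M.msg e f → ∃ m, (ρ e).2.1 = CAct.send (M.lab e) m (M.loc f) ∧
      (ρ f).2.1 = CAct.recv (M.lab f) m (M.loc e))

/-- the run `ρ` is accepting -/
def IsAccepting (C : CFM P A) (M : MSC P A E)
    (ρ : E → C.S × CAct P A C.Msg × C.S) : Prop :=
  ∃ s : P → C.S, s ∈ C.Acc ∧ ∀ p,
    ((∃ e, M.loc e = p) → ∃ e, M.loc e = p ∧ (¬ ∃ f, M.next e f) ∧ s p = (ρ e).2.2) ∧
    ((¬ ∃ e, M.loc e = p) → s p = C.ι p)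

/-- `M ∈ L(C)` -/
def Accepts (C : CFM P A) (M : MSC P A E) : Prop :=
  ∃ ρ, C.IsRun M ρ ∧ C.IsAccepting M ρ

/-- deterministic CFMs -/
def Deterministic (C : CFM P A) : Prop :=
  ∀ p s γ₁ s₁ γ₂ s₂, (s, γ₁, s₁) ∈ C.Δ p → (s, γ₂, s₂) ∈ C.Δ p →
    CAct.labelOf γ₁ = CAct.labelOf γ₂ →
    ((∀ a₁ a₂, γ₁ = CAct.internal a₁ → γ₂ = CAct.internal a₂ → s₁ = s₂) ∧
     (∀ a₁ m₁ a₂ m₂ q, γ₁ = CAct.send a₁ m₁ q → γ₂ = CAct.send a₂ m₂ q →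
        s₁ = s₂ ∧ m₁ = m₂) ∧
     (∀ a₁ a₂ m q, γ₁ = CAct.recv a₁ m q → γ₂ = CAct.recv a₂ m q → s₁ = s₂))

end CFM

/-- acceptance of the extended MSC `(M, ξ)` by a CFM over a product alphabet -/
def AcceptsExt {P A E Ξ : Type} (C : CFM P (A × Ξ)) (M : MSC P A E) (ξ : E → Ξ) : Prop :=
  C.Accepts (M.relabel fun e => (M.lab e, ξ e))

/-- apply `μ` to an extended event, sending both `⊥` and `⊤` to `none` -/
def extToOptMap {E Θ : Type} (μ : E → Θ) : ExtEv E → Option Θ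
  | .evt g => some (μ g)
  | _ => none

/-- apply `μ` to an extended event, preserving `⊥` and `⊤` -/
def extMap {E Θ : Type} (μ : E → Θ) : ExtEv E → ExtEv Θ
  | .bot => ExtEv.bot
  | .evt g => ExtEv.evt (μ g)
  | .top => ExtEv.top

/-- formulas of the temporal logic TL -/
inductive TL (P A : Type) : Type where
  | lab (a : A) : TL P A
  | proc (p : P) : TL P A
  | disj (φ ψ : TL P A) : TL P A
  | neg (φ : TL P A) : TL P A
  | co (φ : TL P A) : TL P A
  | tuntil (φ ψ : TL P A) : TL P A
  | tsince (φ ψ : TL P A) : TL P A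

/-- `M, e ⊨ φ` -/
def TLsat (M : MSC P A E) : TL P A → E → Prop
  | .lab a, e => M.lab e = a
  | .proc p, e => M.loc e = p
  | .disj φ ψ, e => TLsat M φ e ∨ TLsat M ψ e
  | .neg φ, e => ¬ TLsat M φ e
  | .co φ, e => ∃ f, ¬ M.le e f ∧ ¬ M.le f e ∧ TLsat M φ f
  | .tuntil φ ψ, e => ∃ f, M.lt e f ∧ TLsat M ψ f ∧ ∀ g, M.lt e g → M.lt g f → TLsat M φ g
  | .tsince φ ψ, e => ∃ f, M.lt f e ∧ TLsat M ψ f ∧ ∀ g, M.lt f g → M.lt g e → TLsat M φ g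

open Classical

variable {P A E : Type}

section MSCAux

variable (M : MSC P A E)

lemma MSC.le_refl' (e : E) : M.le e e := Relation.ReflTransGen.refl

lemma MSC.le_trans' {e f g : E} (h : M.le e f) (h' : M.le f g) : M.le e g :=
  Relation.ReflTransGen.trans h h'

lemma MSC.nextStar_le {e f : E} (h : M.nextStar e f) : M.le e f :=
  by
    induction h with
    | refl => exact Relation.ReflTransGen.refl
    | tail _ hx ih => exact ih.tail (Or.inl hx)

lemma MSC.nextStar_loc {e f : E} (h : M.nextStar e f) : M.loc e = M.loc f := by
  induction h with
  | refl => rfl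
  | tail _ hx ih => exact ih.trans (M.next_loc hx)

lemma MSC.nextStar_antisymm {e f : E} (h : M.nextStar e f) (h' : M.nextStar f e) : e = f :=
  M.causal_antisymm (M.nextStar_le h) (M.nextStar_le h')

lemma MSC.lt_of_next {e f : E} (h : M.next e f) : M.lt e f := by
  refine ⟨Relation.ReflTransGen.single (Or.inl h), ?_⟩
  rintro rfl; exact M.next_irrefl e h

lemma MSC.lt_of_msg {e f : E} (h : M.msg e f) : M.lt e f := by
  refine ⟨Relation.ReflTransGen.single (Or.inr h), ?_⟩
  rintro rfl; exact M.msg_loc h rfl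

lemma MSC.lt_trans' {e f g : E} (h : M.lt e f) (h' : M.lt f g) : M.lt e g := by
  refine ⟨M.le_trans' h.1 h'.1, ?_⟩
  rintro rfl; exact h'.2 (M.causal_antisymm h'.1 h.1)

lemma MSC.lt_irrefl' (e : E) : ¬ M.lt e e := fun h => h.2 rfl

/-- decompose a nontrivial `→*` at the target -/
lemma MSC.nextStar_cases {e f : E} (h : M.nextStar e f) :
    f = e ∨ ∃ c, M.nextStar e c ∧ M.next c f :=
  Relation.ReflTransGen.cases_tail h

lemma pathSem_nil (e f : E) : pathSem M [] e f ↔ e = f := Iff.rfl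

lemma pathSem_append (α β : PathExpr P A) (e g : E) :
    pathSem M (α ++ β) e g ↔ ∃ f, pathSem M α e f ∧ pathSem M β f g := by
  induction α generalizing e with
  | nil =>
    simp only [List.nil_append, pathSem]
    constructor
    · intro h; exact ⟨e, rfl, h⟩
    · rintro ⟨f, rfl, h⟩; exact h
  | cons l α ih =>
    simp only [List.cons_append, pathSem]
    constructor
    · rintro ⟨f, hf, h⟩
      obtain ⟨m, hm, hm'⟩ := (ih f).1 h
      exact ⟨m, ⟨f, hf, hm⟩, hm'⟩
    · rintro ⟨m, ⟨f, hf, hm⟩, hm'⟩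
      exact ⟨f, hf, (ih f).2 ⟨m, hm, hm'⟩⟩

lemma pathSem_snoc (σ : PathExpr P A) (l : PathLetter P A) (e g : E) :
    pathSem M (σ ++ [l]) e g ↔ ∃ f, pathSem M σ e f ∧ letterSem M l f g := by
  rw [pathSem_append]
  constructor
  · rintro ⟨f, hf, f', hl, rfl⟩; exact ⟨f, hf, hl⟩
  · rintro ⟨f, hf, hl⟩; exact ⟨f, hf, g, hl, rfl⟩

end MSCAux


section Good

variable (M : MSC P A E)

/-- Key comparability/monotonicity property of source sets of path expressions. -/
lemma good (σ : PathExpr P A) :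
    ∀ g g' f f', M.nextStar g g' → pathSem M σ f g → pathSem M σ f' g' →
      (M.nextStar f f' ∨ M.nextStar f' f) ∧ ∃ f'', pathSem M σ f'' g' ∧ M.nextStar f f'' := by
  induction σ using List.reverseRecOn with
  | nil =>
    intro g g' f f' hgg hf hf'
    rw [pathSem_nil] at hf hf'
    subst hf; subst hf'
    exact ⟨Or.inl hgg, f', rfl, hgg⟩
  | append_singleton σ l ih =>
    intro g g' f f' hgg hf hf'
    rw [pathSem_snoc] at hf hf'
    obtain ⟨h, hfh, hl⟩ := hf
    obtain ⟨h', hf'h, hl'⟩ := hf'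
    cases l with
    | next =>
      simp only [letterSem] at hl hl'
      have hhh : M.nextStar h h' := by
        rcases M.nextStar_cases hgg with heq | ⟨c, hgc, hcg'⟩
        · subst heq
          rw [M.next_left_unique hl hl']
          exact Relation.ReflTransGen.refl
        · have : c = h' := M.next_left_unique hcg' hl'
          subst this
          exact Relation.ReflTransGen.head hl hgc
      obtain ⟨hcmp, f'', hf'', hff⟩ := ih h h' f f' hhh hfh hf'h
      exact ⟨hcmp, f'', (pathSem_snoc M σ _ _ _).2 ⟨h', hf'', hl'⟩, hff⟩
    | nextStar =>
      simp only [letterSem] at hl hl'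
      have hloc : M.loc h = M.loc h' := by
        rw [M.nextStar_loc hl, M.nextStar_loc hgg, M.nextStar_loc hl']
      rcases M.next_total h h' hloc with hhh | hhh
      · obtain ⟨hcmp, f'', hf'', hff⟩ := ih h h' f f' hhh hfh hf'h
        exact ⟨hcmp, f'', (pathSem_snoc M σ _ _ _).2 ⟨h', hf'', hl'⟩, hff⟩
      · obtain ⟨hcmp, _, _, _⟩ := ih h' h f' f hhh hf'h hfh
        refine ⟨hcmp.symm, f, (pathSem_snoc M σ _ _ _).2 ⟨h, hfh, hl.trans hgg⟩,
          Relation.ReflTransGen.refl⟩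
    | lab a =>
      obtain ⟨rfl, hla⟩ := hl
      obtain ⟨rfl, hla'⟩ := hl'
      obtain ⟨hcmp, f'', hf'', hff⟩ := ih h h' f f' hgg hfh hf'h
      exact ⟨hcmp, f'', (pathSem_snoc M σ _ _ _).2 ⟨h', hf'', rfl, hla'⟩, hff⟩
    | msg p q =>
      obtain ⟨hp, hq, hm⟩ := hl
      obtain ⟨hp', hq', hm'⟩ := hl'
      have hhh : M.nextStar h h' :=
        (M.fifo hm hm' (hp.trans hp'.symm) (hq.trans hq'.symm)).2 hgg
      obtain ⟨hcmp, f'', hf'', hff⟩ := ih h h' f f' hhh hfh hf'h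
      exact ⟨hcmp, f'', (pathSem_snoc M σ _ _ _).2 ⟨h', hf'', hp', hq', hm'⟩, hff⟩

end Good


section Greatest

/-- a finite nonempty set that is totally preordered by `r` has a greatest element -/
lemma exists_greatest {α : Type*} (r : α → α → Prop) (htrans : Transitive r) (hrefl : Reflexive r)
    (s : Finset α) (hs : s.Nonempty) (htot : ∀ a ∈ s, ∀ b ∈ s, r a b ∨ r b a) :
    ∃ m ∈ s, ∀ a ∈ s, r a m := by
  classical
  induction s using Finset.induction_on with
  | empty => exact absurd hs (by simp)
  | @insert x t hx ih =>
    by_cases ht : t.Nonempty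
    · obtain ⟨m, hm, hmax⟩ := ih ht (fun a ha b hb =>
        htot a (Finset.mem_insert_of_mem ha) b (Finset.mem_insert_of_mem hb))
      rcases htot x (Finset.mem_insert_self x t) m (Finset.mem_insert_of_mem hm) with hxm | hmx
      · refine ⟨m, Finset.mem_insert_of_mem hm, ?_⟩
        intro a ha
        rcases Finset.mem_insert.1 ha with rfl | ha
        · exact hxm
        · exact hmax a ha
      · refine ⟨x, Finset.mem_insert_self x t, ?_⟩
        intro a ha
        rcases Finset.mem_insert.1 ha with rfl | ha
        · exact hrefl a
        · exact htrans (hmax a ha) hmx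
    · rw [Finset.not_nonempty_iff_eq_empty] at ht
      subst ht
      refine ⟨x, Finset.mem_insert_self x _, ?_⟩
      intro a ha
      rcases Finset.mem_insert.1 ha with rfl | ha
      · exact hrefl a
      · simp at ha

end Greatest

section Last

variable (M : MSC P A E)

lemma isLast_not_top (σ : PathExpr P A) (e : E) : ¬ IsLast M σ e ExtEv.top := fun h => h

lemma exists_isLast (σ : PathExpr P A) (e : E) : ∃ x, IsLast M σ e x := by
  classical
  by_cases h : ∃ f, pathSem M σ f e
  · letI := M.fintypeE
    obtain ⟨f0, hf0⟩ := h
    set s : Finset E := Finset.univ.filter (fun f => pathSem M σ f e) with hs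
    have hmem : ∀ f, f ∈ s ↔ pathSem M σ f e := by
      intro f; simp [hs]
    obtain ⟨m, hm, hmax⟩ := exists_greatest M.nextStar
      (fun _ _ _ h1 h2 => Relation.ReflTransGen.trans h1 h2)
      (fun _ => Relation.ReflTransGen.refl)
      s ⟨f0, (hmem f0).2 hf0⟩
      (fun a ha b hb =>
        (good M σ e e a b Relation.ReflTransGen.refl ((hmem a).1 ha) ((hmem b).1 hb)).1)
    refine ⟨ExtEv.evt m, (hmem m).1 hm, ?_⟩
    intro f hf
    exact M.nextStar_le (hmax f ((hmem f).2 hf))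
  · exact ⟨ExtEv.bot, fun f hf => h ⟨f, hf⟩⟩

lemma isLast_unique {σ : PathExpr P A} {e : E} {x y : ExtEv E}
    (hx : IsLast M σ e x) (hy : IsLast M σ e y) : x = y := by
  cases x with
  | top => exact absurd hx (isLast_not_top M σ e)
  | bot =>
    cases y with
    | top => exact absurd hy (isLast_not_top M σ e)
    | bot => rfl
    | evt g => exact absurd hy.1 (hx g)
  | evt g =>
    cases y with
    | top => exact absurd hy (isLast_not_top M σ e)
    | bot => exact absurd hx.1 (hy g)
    | evt g' =>
      have := M.causal_antisymm (hy.2 g hx.1) (hx.2 g' hy.1)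
      rw [this]

noncomputable def theLast (σ : PathExpr P A) (e : E) : ExtEv E :=
  (exists_isLast M σ e).choose

lemma theLast_spec (σ : PathExpr P A) (e : E) : IsLast M σ e (theLast M σ e) :=
  (exists_isLast M σ e).choose_spec

lemma theLast_eq {σ : PathExpr P A} {e : E} {x : ExtEv E} (h : IsLast M σ e x) :
    theLast M σ e = x :=
  isLast_unique M (theLast_spec M σ e) h

lemma isLast_congr {σ τ : PathExpr P A} {e e' : E}
    (h : ∀ f, pathSem M σ f e ↔ pathSem M τ f e') (x : ExtEv E) :
    IsLast M σ e x → IsLast M τ e' x := by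
  cases x with
  | top => exact id
  | bot => exact fun H f hf => H f ((h f).2 hf)
  | evt g => exact fun H => ⟨(h g).1 H.1, fun f hf => H.2 f ((h f).2 hf)⟩

lemma theLast_congr {σ τ : PathExpr P A} {e e' : E}
    (h : ∀ f, pathSem M σ f e ↔ pathSem M τ f e') :
    theLast M τ e' = theLast M σ e :=
  theLast_eq M (isLast_congr M h _ (theLast_spec M σ e))

lemma theLast_nil (e : E) : theLast M [] e = ExtEv.evt e := by
  refine theLast_eq M ⟨rfl, ?_⟩
  intro f hf
  rw [pathSem_nil] at hf
  subst hf
  exact Relation.ReflTransGen.refl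

lemma theLast_next {σ : PathExpr P A} {d e : E} (hd : M.next d e) :
    theLast M (σ ++ [PathLetter.next]) e = theLast M σ d := by
  refine theLast_congr M (fun f => ?_)
  rw [pathSem_snoc]
  constructor
  · intro hf; exact ⟨d, hf, hd⟩
  · rintro ⟨g, hg, hge⟩
    rwa [M.next_left_unique hge hd] at hg

lemma theLast_next_bot {σ : PathExpr P A} {e : E} (hnd : ¬ ∃ d, M.next d e) :
    theLast M (σ ++ [PathLetter.next]) e = ExtEv.bot := by
  refine theLast_eq M (fun f hf => ?_)
  rw [pathSem_snoc] at hf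
  obtain ⟨g, _, hge⟩ := hf
  exact hnd ⟨g, hge⟩

lemma theLast_lab {σ : PathExpr P A} {e : E} {a : A} (h : M.lab e = a) :
    theLast M (σ ++ [PathLetter.lab a]) e = theLast M σ e := by
  refine theLast_congr M (fun f => ?_)
  rw [pathSem_snoc]
  constructor
  · intro hf; exact ⟨e, hf, rfl, h⟩
  · rintro ⟨g, hg, rfl, _⟩; exact hg

lemma theLast_lab_bot {σ : PathExpr P A} {e : E} {a : A} (h : M.lab e ≠ a) :
    theLast M (σ ++ [PathLetter.lab a]) e = ExtEv.bot := by
  refine theLast_eq M (fun f hf => ?_)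
  rw [pathSem_snoc] at hf
  obtain ⟨g, _, rfl, hla⟩ := hf
  exact h hla

lemma theLast_msg {σ : PathExpr P A} {m e : E} {p q : P}
    (hm : M.msg m e) (hp : M.loc m = p) (hq : M.loc e = q) :
    theLast M (σ ++ [PathLetter.msg p q]) e = theLast M σ m := by
  refine theLast_congr M (fun f => ?_)
  rw [pathSem_snoc]
  constructor
  · intro hf; exact ⟨m, hf, hp, hq, hm⟩
  · rintro ⟨g, hg, _, _, hgm⟩
    rwa [(M.msg_unique hgm hm (Or.inr (Or.inr (Or.inr rfl)))).1] at hg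

lemma theLast_msg_bot {σ : PathExpr P A} {e : E} {p q : P}
    (h : ¬ ∃ m, M.msg m e ∧ M.loc m = p ∧ M.loc e = q) :
    theLast M (σ ++ [PathLetter.msg p q]) e = ExtEv.bot := by
  refine theLast_eq M (fun f hf => ?_)
  rw [pathSem_snoc] at hf
  obtain ⟨g, _, hp, hq, hgm⟩ := hf
  exact h ⟨g, hgm, hp, hq⟩

lemma theLast_star_evt {σ : PathExpr P A} {e : E} {g : E}
    (h : theLast M σ e = ExtEv.evt g) :
    theLast M (σ ++ [PathLetter.nextStar]) e = ExtEv.evt g := by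
  have hsp := theLast_spec M σ e
  rw [h] at hsp
  obtain ⟨hpath, hmax⟩ := hsp
  refine theLast_eq M ⟨(pathSem_snoc M σ _ _ _).2 ⟨e, hpath, Relation.ReflTransGen.refl⟩, ?_⟩
  intro f hf
  rw [pathSem_snoc] at hf
  obtain ⟨h', hfh', hh'e⟩ := hf
  obtain ⟨_, f'', hf''e, hff''⟩ := good M σ h' e f g hh'e hfh' hpath
  exact M.le_trans' (M.nextStar_le hff'') (hmax f'' hf''e)

lemma theLast_star_bot_pred {σ : PathExpr P A} {d e : E}
    (h : theLast M σ e = ExtEv.bot) (hd : M.next d e) :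
    theLast M (σ ++ [PathLetter.nextStar]) e = theLast M (σ ++ [PathLetter.nextStar]) d := by
  have hsp := theLast_spec M σ e
  rw [h] at hsp
  refine theLast_congr M (fun f => ?_)
  rw [pathSem_snoc, pathSem_snoc]
  constructor
  · rintro ⟨g, hg, hgd⟩
    exact ⟨g, hg, hgd.tail hd⟩
  · rintro ⟨g, hg, hge⟩
    rcases M.nextStar_cases hge with heq | ⟨c, hgc, hce⟩
    · cases heq; exact absurd hg (hsp f)
    · exact ⟨g, hg, (M.next_left_unique hce hd) ▸ hgc⟩

lemma theLast_star_bot_min {σ : PathExpr P A} {e : E}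
    (h : theLast M σ e = ExtEv.bot) (hnd : ¬ ∃ d, M.next d e) :
    theLast M (σ ++ [PathLetter.nextStar]) e = ExtEv.bot := by
  have hsp := theLast_spec M σ e
  rw [h] at hsp
  refine theLast_eq M (fun f hf => ?_)
  rw [pathSem_snoc] at hf
  obtain ⟨g, hg, hge⟩ := hf
  rcases M.nextStar_cases hge with heq | ⟨c, _, hce⟩
  · cases heq; exact absurd hg (hsp f)
  · exact hnd ⟨c, hce⟩

end Last


section CFMDef

variable {Θ : Type}

/-- truncate a finite vector to a function on `ℕ` (with `none` beyond the bound) -/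
def extV {n : ℕ} (v : Fin (n + 1) → Option Θ) : ℕ → Option Θ :=
  fun i => if h : i < n + 1 then v ⟨i, h⟩ else none

open Classical in
/-- the local update relation of the gossip CFM: `w` is the vector of values
`ξ₁(last_{π.take i}(e))` at the current event, computed from the vector `s` at the
predecessor event, the incoming message `inc` (sender process and vector),
the current `A`-label `a₀` and the current `Θ`-label `θ₁`. -/
def WUpd (π : PathExpr P A) (p : P) (s : ℕ → Option Θ) (inc : Option (P × (ℕ → Option Θ)))
    (a₀ : A) (θ₁ : Θ) (w : ℕ → Option Θ) : Prop :=
  w 0 = some θ₁ ∧ ∀ i l, π[i]? = some l →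
    w (i + 1) = (match l with
      | PathLetter.next => s i
      | PathLetter.nextStar => (match w i with
          | some θ => some θ
          | none => s (i + 1))
      | PathLetter.lab a => if a = a₀ then w i else none
      | PathLetter.msg p' q => (match inc with
          | some (r, u) => if r = p' ∧ p = q then u i else none
          | none => none))

/-- extract the incoming message information from a transition action -/
def incOf {n : ℕ} : CAct P (A × (Θ × Option Θ)) (Fin (n + 1) → Option Θ) →
    Option (P × (ℕ → Option Θ))
  | CAct.recv _ m q => some (q, extV m)
  | _ => none

variable [Fintype Θ]

/-- the CFM computing `ξ₁(last_{π.take i}(e))` for all prefixes of `π` -/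
noncomputable def gossipCFM (Θ : Type) [Fintype Θ] (π : PathExpr P A) :
    CFM P (A × (Θ × Option Θ)) where
  Msg := Fin (π.length + 1) → Option Θ
  msgFin := inferInstance
  S := Fin (π.length + 1) → Option Θ
  sFin := inferInstance
  ι := fun _ _ => none
  Δ := fun p => { t | ∃ a₀ θ₁ θ₂, (t.2.1).labelOf = (a₀, θ₁, θ₂) ∧
      WUpd π p (extV t.1) (incOf t.2.1) a₀ θ₁ (extV t.2.2) ∧
      θ₂ = extV t.2.2 π.length ∧
      (∀ a m q, t.2.1 = CAct.send a m q → q ≠ p ∧ m = t.2.2) ∧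
      (∀ a m q, t.2.1 = CAct.recv a m q → q ≠ p) }
  Acc := Set.univ
  wf_send := by
    rintro p s a m q s' ⟨a₀, θ₁, θ₂, _, _, _, hsend, _⟩
    exact (hsend a m q rfl).1
  wf_recv := by
    rintro p s a m q s' ⟨a₀, θ₁, θ₂, _, _, _, _, hrecv⟩
    exact hrecv a m q rfl

end CFMDef

section Values

variable {Θ : Type} (M : MSC P A E)

/-- the intended value `ξ₁(last_{π.take i}(e))` -/
noncomputable def lastVal (ξ₁ : E → Θ) (π : PathExpr P A) (i : ℕ) (e : E) : Option Θ :=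
  extToOptMap ξ₁ (theLast M (π.take i) e)

lemma lastVal_zero (ξ₁ : E → Θ) (π : PathExpr P A) (e : E) :
    lastVal M ξ₁ π 0 e = some (ξ₁ e) := by
  rw [lastVal, List.take_zero, theLast_nil]
  rfl

end Values


section Main

variable {Θ : Type} [Fintype Θ]

lemma take_succ_eq (π : PathExpr P A) {i : ℕ} {l : PathLetter P A} (hl : π[i]? = some l) :
    π.take (i + 1) = π.take i ++ [l] := by
  rw [List.take_succ, hl]
  rfl

lemma run_values (π : PathExpr P A) (M : MSC P A E) (ξ : E → Θ × Option Θ)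
    (ρ : E → (gossipCFM Θ π).S × CAct P (A × (Θ × Option Θ)) (gossipCFM Θ π).Msg ×
      (gossipCFM Θ π).S)
    (hρ : (gossipCFM Θ π).IsRun (M.relabel fun e => (M.lab e, ξ e)) ρ) :
    ∀ e : E, ∀ i ≤ π.length, extV ((ρ e).2.2) i = lastVal M (fun g => (ξ g).1) π i e := by
  classical
  letI := M.fintypeE
  obtain ⟨hΔ, hlab, hinit, hnext, hloc', hmsg'⟩ := hρ
  simp only [MSC.relabel] at hΔ hlab hinit hnext hloc' hmsg'
  set ξ₁ : E → Θ := fun g => (ξ g).1 with hξ₁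
  suffices H : ∀ N, ∀ e : E, (Finset.univ.filter (fun f => M.lt f e)).card < N →
      ∀ i ≤ π.length, extV ((ρ e).2.2) i = lastVal M ξ₁ π i e by
    intro e
    exact H _ e (Nat.lt_succ_self _)
  intro N
  induction N with
  | zero => intro e he; omega
  | succ N IH =>
    intro e he
    have hIH : ∀ f, M.lt f e → ∀ i ≤ π.length, extV ((ρ f).2.2) i = lastVal M ξ₁ π i f := by
      intro f hf
      apply IH
      have hsub : (Finset.univ.filter (fun g => M.lt g f)) ⊂
          (Finset.univ.filter (fun g => M.lt g e)) := by
        rw [Finset.ssubset_iff_of_subset]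
        · exact ⟨f, by simp [hf], by simp [M.lt_irrefl']⟩
        · intro g hg
          simp only [Finset.mem_filter, Finset.mem_univ, true_and] at hg ⊢
          exact M.lt_trans' hg hf
      exact lt_of_lt_of_le (Finset.card_lt_card hsub) (Nat.lt_succ_iff.mp he)
    obtain ⟨a₀, θ₁, θ₂, hl0, hw, hn, hsendc, hrecvc⟩ := hΔ e
    have hlabe : (a₀, θ₁, θ₂) = (M.lab e, ξ e) := hl0.symm.trans (hlab e)
    have hθ₁ : θ₁ = (ξ e).1 := congrArg (fun x => x.2.1) hlabe
    have ha₀ : a₀ = M.lab e := congrArg (fun x => x.1) hlabe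
    -- the state at the predecessor
    have hpredS : (∃ d, M.next d e ∧ ∀ j ≤ π.length,
          extV ((ρ e).1) j = lastVal M ξ₁ π j d)
        ∨ ((¬ ∃ d, M.next d e) ∧ ∀ j, extV ((ρ e).1) j = none) := by
      by_cases hp : ∃ d, M.next d e
      · obtain ⟨d, hd⟩ := hp
        refine Or.inl ⟨d, hd, fun j hj => ?_⟩
        rw [← hnext d e hd]
        exact hIH d (M.lt_of_next hd) j hj
      · refine Or.inr ⟨hp, fun j => ?_⟩
        rw [hinit e hp]
        simp [gossipCFM, extV]
    -- the incoming message
    have hincS : (∃ m0, M.msg m0 e ∧ ∀ j ≤ π.length,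
          incOf ((ρ e).2.1) = some (M.loc m0, extV ((ρ m0).2.2)) ∧
          extV ((ρ m0).2.2) j = lastVal M ξ₁ π j m0)
        ∨ ((¬ ∃ m, M.msg m e) ∧ incOf ((ρ e).2.1) = none) := by
      by_cases hr : ∃ m, M.msg m e
      · obtain ⟨m0, hm0⟩ := hr
        obtain ⟨mv, hs1, hr1⟩ := hmsg' m0 e hm0
        obtain ⟨_, _, _, _, _, _, hsendc', _⟩ := hΔ m0
        have hmv : mv = (ρ m0).2.2 := (hsendc' _ _ _ hs1).2
        refine Or.inl ⟨m0, hm0, fun j hj => ⟨by rw [hr1, hmv]; rfl, ?_⟩⟩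
        exact hIH m0 (M.lt_of_msg hm0) j hj
      · refine Or.inr ⟨hr, ?_⟩
        by_cases hs : ∃ f, M.msg e f
        · obtain ⟨f, hf⟩ := hs
          obtain ⟨mv, hs1, _⟩ := hmsg' e f hf
          rw [hs1]; rfl
        · obtain ⟨a, ha⟩ := hloc' e hs hr
          rw [ha]; rfl
    intro i hi
    induction i with
    | zero =>
      rw [hw.1, hθ₁, lastVal_zero]
    | succ i ihi =>
      have hi' : i < π.length := hi
      obtain ⟨l, hig⟩ : ∃ l, π[i]? = some l := ⟨π[i], List.getElem?_eq_getElem hi'⟩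
      have hstep := hw.2 i l hig
      have htake := take_succ_eq π hig
      have ihi' := ihi (le_of_lt hi')
      rw [hstep]
      cases l with
      | next =>
        show extV (ρ e).1 i = _
        rcases hpredS with ⟨d, hd, hs⟩ | ⟨hp, hs⟩
        · conv_rhs => rw [lastVal, htake, theLast_next M hd]
          rw [hs i (le_of_lt hi')]; rfl
        · conv_rhs => rw [lastVal, htake, theLast_next_bot M hp]
          rw [hs i]; rfl
      | nextStar =>
        show (match extV (ρ e).2.2 i with
              | some θ => some θ
              | none => extV (ρ e).1 (i+1)) = _
        rw [ihi']
        cases htl : theLast M (π.take i) e with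
        | top => exact absurd (htl ▸ theLast_spec M _ e) (isLast_not_top M _ e)
        | evt g =>
          conv_rhs => rw [lastVal, htake, theLast_star_evt M htl]
          rw [show lastVal M ξ₁ π i e = some (ξ₁ g) from by rw [lastVal, htl]; rfl]
          rfl
        | bot =>
          rw [show lastVal M ξ₁ π i e = none from by rw [lastVal, htl]; rfl]
          show extV (ρ e).1 (i+1) = _
          rcases hpredS with ⟨d, hd, hs⟩ | ⟨hp, hs⟩
          · conv_rhs => rw [lastVal, htake, theLast_star_bot_pred M htl hd, ← htake]
            rw [hs (i+1) hi]; rfl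
          · conv_rhs => rw [lastVal, htake, theLast_star_bot_min M htl hp]
            rw [hs (i+1)]; rfl
      | lab a =>
        show (if a = a₀ then extV (ρ e).2.2 i else none) = _
        by_cases hA : a = a₀
        · rw [if_pos hA, ihi']
          conv_rhs => rw [lastVal, htake, theLast_lab M (show M.lab e = a by rw [hA, ha₀])]
          rfl
        · rw [if_neg hA]
          conv_rhs => rw [lastVal, htake,
            theLast_lab_bot M (show M.lab e ≠ a from fun h => hA (by rw [ha₀]; exact h.symm))]
          rfl
      | msg p' q =>
        show (match incOf (ρ e).2.1 with
              | some (r, u) => if r = p' ∧ M.loc e = q then u i else none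
              | none => none) = _
        rcases hincS with ⟨m0, hm0, hj⟩ | ⟨hr, hinc⟩
        · obtain ⟨hinc, hval⟩ := hj i (le_of_lt hi')
          rw [hinc]
          show (if M.loc m0 = p' ∧ M.loc e = q then extV (ρ m0).2.2 i else none) = _
          by_cases hc : M.loc m0 = p' ∧ M.loc e = q
          · rw [if_pos hc, hval]
            conv_rhs => rw [lastVal, htake, theLast_msg M hm0 hc.1 hc.2]
            rfl
          · rw [if_neg hc]
            conv_rhs => rw [lastVal, htake, theLast_msg_bot M
              (show ¬ ∃ m, M.msg m e ∧ M.loc m = p' ∧ M.loc e = q by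
                rintro ⟨m, hm, h1, h2⟩
                exact hc ⟨((M.msg_unique hm hm0 (Or.inr (Or.inr (Or.inr rfl)))).1) ▸ h1, h2⟩)]
            rfl
        · rw [hinc]
          show (none : Option Θ) = _
          conv_rhs => rw [lastVal, htake, theLast_msg_bot M
            (show ¬ ∃ m, M.msg m e ∧ M.loc m = p' ∧ M.loc e = q from
              fun ⟨m, hm, _, _⟩ => hr ⟨m, hm⟩)]
          rfl

end Main


section Construction

variable {Θ : Type} [Fintype Θ]

lemma msg_not_both (M : MSC P A E) {e f m : E} (h : M.msg e f) (h' : M.msg m e) : False := by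
  obtain ⟨h1, h2⟩ := M.msg_unique h h' (Or.inr (Or.inl rfl))
  cases h2
  exact M.msg_loc h rfl

lemma exists_proc_max (M : MSC P A E) (p : P) (h : ∃ e, M.loc e = p) :
    ∃ e, M.loc e = p ∧ ¬ ∃ f, M.next e f := by
  classical
  letI := M.fintypeE
  obtain ⟨e0, he0⟩ := h
  set s : Finset E := Finset.univ.filter (fun f => M.loc f = p) with hs
  have hmem : ∀ f, f ∈ s ↔ M.loc f = p := by intro f; simp [hs]
  obtain ⟨m, hm, hmax⟩ := exists_greatest M.nextStar
    (fun _ _ _ h1 h2 => Relation.ReflTransGen.trans h1 h2)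
    (fun _ => Relation.ReflTransGen.refl)
    s ⟨e0, (hmem e0).2 he0⟩
    (fun a ha b hb => M.next_total a b (((hmem a).1 ha).trans ((hmem b).1 hb).symm))
  refine ⟨m, (hmem m).1 hm, ?_⟩
  rintro ⟨f, hf⟩
  have hfs : f ∈ s := (hmem f).2 ((M.next_loc hf).symm.trans ((hmem m).1 hm))
  have : m = f := M.nextStar_antisymm (Relation.ReflTransGen.single hf) (hmax f hfs)
  exact M.next_irrefl m (this ▸ hf)

lemma wupd_intended (π : PathExpr P A) (M : MSC P A E) (ξ₁ : E → Θ) (e : E)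
    (s : ℕ → Option Θ) (inc : Option (P × (ℕ → Option Θ)))
    (hs : (∃ d, M.next d e ∧ ∀ j, j ≤ π.length → s j = lastVal M ξ₁ π j d) ∨
      ((¬ ∃ d, M.next d e) ∧ ∀ j, s j = none))
    (hinc : (∃ m0 u, M.msg m0 e ∧ inc = some (M.loc m0, u) ∧
        ∀ j, j ≤ π.length → u j = lastVal M ξ₁ π j m0) ∨
      ((¬ ∃ m, M.msg m e) ∧ inc = none))
    (w : ℕ → Option Θ) (hw : ∀ j, j ≤ π.length → w j = lastVal M ξ₁ π j e) :
    WUpd π (M.loc e) s inc (M.lab e) (ξ₁ e) w := by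
  constructor
  · rw [hw 0 (Nat.zero_le _), lastVal_zero]
  · intro i l hig
    have hi' : i < π.length := by
      by_contra hcon
      rw [List.getElem?_eq_none (by omega)] at hig
      cases hig
    have htake := take_succ_eq π hig
    rw [hw (i+1) hi']
    cases l with
    | next =>
      show lastVal M ξ₁ π (i+1) e = s i
      rcases hs with ⟨d, hd, hsv⟩ | ⟨hp, hsv⟩
      · rw [hsv i (le_of_lt hi'), lastVal, lastVal, htake, theLast_next M hd]
      · rw [hsv i, lastVal, htake, theLast_next_bot M hp]; rfl
    | nextStar =>
      show lastVal M ξ₁ π (i+1) e =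
        (match w i with | some θ => some θ | none => s (i+1))
      rw [hw i (le_of_lt hi')]
      cases htl : theLast M (π.take i) e with
      | top => exact absurd (htl ▸ theLast_spec M _ e) (isLast_not_top M _ e)
      | evt g =>
        rw [show lastVal M ξ₁ π i e = some (ξ₁ g) from by rw [lastVal, htl]; rfl]
        show lastVal M ξ₁ π (i+1) e = some (ξ₁ g)
        rw [lastVal, htake, theLast_star_evt M htl]; rfl
      | bot =>
        rw [show lastVal M ξ₁ π i e = none from by rw [lastVal, htl]; rfl]
        show lastVal M ξ₁ π (i+1) e = s (i+1)
        rcases hs with ⟨d, hd, hsv⟩ | ⟨hp, hsv⟩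
        · rw [hsv (i+1) hi', lastVal, lastVal, htake,
            theLast_star_bot_pred M htl hd, ← htake]
        · rw [hsv (i+1), lastVal, htake, theLast_star_bot_min M htl hp]; rfl
    | lab a =>
      show lastVal M ξ₁ π (i+1) e = if a = M.lab e then w i else none
      by_cases hA : a = M.lab e
      · rw [if_pos hA, hw i (le_of_lt hi'), lastVal, lastVal, htake,
          theLast_lab M hA.symm]
      · rw [if_neg hA, lastVal, htake, theLast_lab_bot M (fun h => hA h.symm)]; rfl
    | msg p' q =>
      rcases hinc with ⟨m0, u, hm0, hiv, huv⟩ | ⟨hr, hiv⟩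
      · subst hiv
        show lastVal M ξ₁ π (i+1) e = if M.loc m0 = p' ∧ M.loc e = q then u i else none
        by_cases hc : M.loc m0 = p' ∧ M.loc e = q
        · rw [if_pos hc, huv i (le_of_lt hi'), lastVal, lastVal, htake,
            theLast_msg M hm0 hc.1 hc.2]
        · rw [if_neg hc, lastVal, htake, theLast_msg_bot M
            (show ¬ ∃ m, M.msg m e ∧ M.loc m = p' ∧ M.loc e = q by
              rintro ⟨m, hm, h1, h2⟩
              exact hc ⟨((M.msg_unique hm hm0 (Or.inr (Or.inr (Or.inr rfl)))).1) ▸ h1, h2⟩)]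
          rfl
      · subst hiv
        show lastVal M ξ₁ π (i+1) e = none
        rw [lastVal, htake, theLast_msg_bot M
          (show ¬ ∃ m, M.msg m e ∧ M.loc m = p' ∧ M.loc e = q from
            fun ⟨m, hm, _, _⟩ => hr ⟨m, hm⟩)]
        rfl

noncomputable def curS (M : MSC P A E) (ξ₁ : E → Θ) (π : PathExpr P A) (e : E) :
    Fin (π.length + 1) → Option Θ := fun i => lastVal M ξ₁ π i.1 e

open Classical in
noncomputable def prevS (M : MSC P A E) (ξ₁ : E → Θ) (π : PathExpr P A) (e : E) :
    Fin (π.length + 1) → Option Θ :=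
  if h : ∃ d, M.next d e then curS M ξ₁ π h.choose else fun _ => none

open Classical in
noncomputable def actS (M : MSC P A E) (ξ : E → Θ × Option Θ) (π : PathExpr P A) (e : E) :
    CAct P (A × (Θ × Option Θ)) (Fin (π.length + 1) → Option Θ) :=
  if hs : ∃ f, M.msg e f then
    CAct.send (M.lab e, ξ e) (curS M (fun g => (ξ g).1) π e) (M.loc hs.choose)
  else if hr : ∃ f, M.msg f e then
    CAct.recv (M.lab e, ξ e) (curS M (fun g => (ξ g).1) π hr.choose) (M.loc hr.choose)
  else CAct.internal (M.lab e, ξ e)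

lemma extV_curS (M : MSC P A E) (ξ₁ : E → Θ) (π : PathExpr P A) (e : E)
    {j : ℕ} (hj : j ≤ π.length) :
    extV (curS M ξ₁ π e) j = lastVal M ξ₁ π j e := by
  rw [extV, dif_pos (by omega : j < π.length + 1)]
  rfl

lemma actS_label (M : MSC P A E) (ξ : E → Θ × Option Θ) (π : PathExpr P A) (e : E) :
    CAct.labelOf (actS M ξ π e) = (M.lab e, ξ e) := by
  unfold actS
  split
  · rfl
  · split <;> rfl

lemma accepts_of (π : PathExpr P A) (M : MSC P A E) (ξ : E → Θ × Option Θ)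
    (hyp : ∀ (e : E) (x : ExtEv E), IsLast M π e x →
      (ξ e).2 = extToOptMap (fun g => (ξ g).1) x) :
    AcceptsExt (gossipCFM Θ π) M ξ := by
  classical
  letI := M.fintypeE
  set ξ₁ : E → Θ := fun g => (ξ g).1 with hξ₁
  refine ⟨fun e => (prevS M ξ₁ π e, actS M ξ π e, curS M ξ₁ π e), ⟨?_, ?_, ?_, ?_, ?_, ?_⟩, ?_⟩
  · -- transitions in Δ
    intro e
    show _ ∈ (gossipCFM Θ π).Δ (M.loc e)
    refine ⟨M.lab e, (ξ e).1, (ξ e).2, ?_, ?_, ?_, ?_, ?_⟩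
    · rw [actS_label]
    · refine wupd_intended π M ξ₁ e _ _ ?_ ?_ _ (fun j hj => extV_curS M ξ₁ π e hj)
      · by_cases hp : ∃ d, M.next d e
        · refine Or.inl ⟨hp.choose, hp.choose_spec, fun j hj => ?_⟩
          show extV (prevS M ξ₁ π e) j = _
          unfold prevS
          rw [dif_pos hp]
          exact extV_curS M ξ₁ π _ hj
        · refine Or.inr ⟨hp, fun j => ?_⟩
          show extV (prevS M ξ₁ π e) j = none
          unfold prevS
          rw [dif_neg hp]
          rw [extV]
          split <;> rfl
      · by_cases hsnd : ∃ f, M.msg e f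
        · refine Or.inr ⟨fun ⟨m, hm⟩ => (msg_not_both M hsnd.choose_spec hm).elim, ?_⟩
          show incOf (actS M ξ π e) = none
          unfold actS
          rw [dif_pos hsnd]
          rfl
        · by_cases hr : ∃ m, M.msg m e
          · refine Or.inl ⟨hr.choose, extV (curS M ξ₁ π hr.choose), hr.choose_spec, ?_,
              fun j hj => extV_curS M ξ₁ π _ hj⟩
            show incOf (actS M ξ π e) = _
            unfold actS
            rw [dif_neg hsnd, dif_pos hr]
            rfl
          · refine Or.inr ⟨hr, ?_⟩
            show incOf (actS M ξ π e) = none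
            unfold actS
            rw [dif_neg hsnd, dif_neg hr]
            rfl
    · show (ξ e).2 = extV (curS M ξ₁ π e) π.length
      rw [extV_curS M ξ₁ π e le_rfl, lastVal, List.take_length]
      exact hyp e _ (theLast_spec M π e)
    · intro a m q h
      have h' : actS M ξ π e = CAct.send a m q := h
      unfold actS at h'
      split_ifs at h' with hsnd hr
      · injection h' with h1 h2 h3
        subst h2; subst h3
        exact ⟨Ne.symm (M.msg_loc hsnd.choose_spec), rfl⟩
    · intro a m q h
      have h' : actS M ξ π e = CAct.recv a m q := h
      unfold actS at h'
      split_ifs at h' with hsnd hr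
      · injection h' with h1 h2 h3
        subst h3
        exact M.msg_loc hr.choose_spec
  · -- labels
    intro e
    exact actS_label M ξ π e
  · -- initial states
    intro e he
    have he' : ¬ ∃ d, M.next d e := he
    show prevS M ξ₁ π e = _
    unfold prevS
    rw [dif_neg he']
    rfl
  · -- successor condition
    intro e f h
    have h' : M.next e f := h
    show curS M ξ₁ π e = prevS M ξ₁ π f
    have hp : ∃ d, M.next d f := ⟨e, h'⟩
    unfold prevS
    rw [dif_pos hp, M.next_left_unique h' hp.choose_spec]
  · -- internal events
    intro e h1 h2
    have h1' : ¬ ∃ f, M.msg e f := h1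
    have h2' : ¬ ∃ f, M.msg f e := h2
    refine ⟨(M.lab e, ξ e), ?_⟩
    show actS M ξ π e = _
    unfold actS
    rw [dif_neg h1', dif_neg h2']
    rfl
  · -- messages
    intro e f h
    have h' : M.msg e f := h
    refine ⟨curS M ξ₁ π e, ?_, ?_⟩
    · show actS M ξ π e = _
      have hsnd : ∃ f', M.msg e f' := ⟨f, h'⟩
      unfold actS
      rw [dif_pos hsnd, (M.msg_unique hsnd.choose_spec h' (Or.inl rfl)).2]
      rfl
    · show actS M ξ π f = _
      have hsnd' : ¬ ∃ f', M.msg f f' := fun ⟨f', hf'⟩ => msg_not_both M hf' h'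
      have hr : ∃ m, M.msg m f := ⟨e, h'⟩
      have he : hr.choose = e := (M.msg_unique hr.choose_spec h'
        (Or.inr (Or.inr (Or.inr rfl)))).1
      unfold actS
      rw [dif_neg hsnd', dif_pos hr, he]
      rfl
  · -- acceptance
    refine ⟨fun p => if h : ∃ e, M.loc e = p then
      curS M ξ₁ π (exists_proc_max M p h).choose else (gossipCFM Θ π).ι p,
      Set.mem_univ _, ?_⟩
    intro p
    constructor
    · intro hp
      have hp' : ∃ e, M.loc e = p := hp
      refine ⟨(exists_proc_max M p hp').choose, (exists_proc_max M p hp').choose_spec.1,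
        (exists_proc_max M p hp').choose_spec.2, ?_⟩
      simp only []
      exact dif_pos hp'
    · intro hp
      have hp'' : ¬ ∃ e, M.loc e = p := hp
      simp only []
      exact dif_neg hp''

end Construction

end Gossip
open Gossip in
/-- Lemma 4: there is a CFM recognizing exactly the extended MSCs
`(M, ξ)` with `ξ(e) = (ξ₁(e), ξ₂(e))` such that `ξ₂(e) = ξ₁(last_π(e))` for all `e`
(with `ξ₁(⊥) = ⊥`). -/
theorem stmt12 {P A : Type} [Fintype P] [Fintype A] (Θ : Type) [Fintype Θ]
    (π : PathExpr P A) :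
    ∃ C : CFM P (A × (Θ × Option Θ)),
      ∀ (E : Type) (M : MSC P A E) (ξ : E → Θ × Option Θ),
        AcceptsExt C M ξ ↔
          ∀ (e : E) (x : ExtEv E), IsLast M π e x →
            (ξ e).2 = extToOptMap (fun g => (ξ g).1) x := by
  classical
  refine ⟨gossipCFM Θ π, fun E M ξ => ⟨?_, fun hyp => accepts_of π M ξ hyp⟩⟩
  intro hacc e x hx
  obtain ⟨ρ, hρ, hAcc⟩ := hacc
  have hvals := run_values π M ξ ρ hρ
  obtain ⟨a₀, θ₁, θ₂, hl0, hw, hn, _, _⟩ := hρ.1 e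
  have hlabe : (a₀, θ₁, θ₂) = (M.lab e, ξ e) := hl0.symm.trans (hρ.2.1 e)
  have hθ₂ : θ₂ = (ξ e).2 := congrArg (fun y => y.2.2) hlabe
  have h1 : (ξ e).2 = extV ((ρ e).2.2) π.length := hθ₂ ▸ hn
  rw [h1, hvals e π.length le_rfl, lastVal, List.take_length, theLast_eq M hx]
end

section
/- Let Θ be a finite set with Θ ∩ {⊥,⊤} = ∅, let p, q ∈ P, and let π, π' ∈ Π_{p,q}. There exists a CFM over P and the alphabet Σ × (Θ × (Θ ∪ {⊥,⊤})) whose language is exactly the set of extended MSCs (M, ξ), with ξ(e) = (ξ₁(e), ξ₂(e)) ∈ Θ × (Θ ∪ {⊥,⊤}), such that for all events e ∈ E_q, ξ₂(e) = ξ₁(f_{π,π'}(e)), where ξ₁(⊥) := ⊥ and ξ₁(⊤) := ⊤. -/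
/-! ### Auxiliary development for Statement 14 -/

open scoped Classical

namespace Stmt14

open Gossip

variable {P A E Θ : Type}

/-- `→*` implies causal `≤`. -/
lemma rtg_le (M : MSC P A E) {e f : E} (h : Relation.ReflTransGen M.next e f) : M.le e f :=
  Relation.ReflTransGen.mono (fun _ _ hx => Or.inl hx) _ _ h

lemma rtg_next_antisymm (M : MSC P A E) {e f : E}
    (h1 : Relation.ReflTransGen M.next e f) (h2 : Relation.ReflTransGen M.next f e) : e = f :=
  M.causal_antisymm (rtg_le M h1) (rtg_le M h2)

lemma loc_eq_of_rtg (M : MSC P A E) {e f : E} (h : Relation.ReflTransGen M.next e f) :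
    M.loc e = M.loc f := by
  induction h with
  | refl => rfl
  | tail _ h2 ih => exact ih.trans (M.next_loc h2)

lemma predMono (M : MSC P A E) {w f w' f' : E} (hw : M.next w f) (hw' : M.next w' f')
    (hff : Relation.ReflTransGen M.next f f') : Relation.ReflTransGen M.next w w' := by
  rcases hff.cases_tail with heq | ⟨c, hc, hcf⟩
  · subst heq
    have := M.next_left_unique hw hw'
    subst this
    exact Relation.ReflTransGen.refl
  · have hcw : c = w' := M.next_left_unique hcf hw'
    subst hcw
    exact Relation.ReflTransGen.head hw hc

lemma succMono (M : MSC P A E) {f' f w' w : E} (hff : Relation.ReflTransGen M.next f' f)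
    (hw : M.next f w) (hw' : M.next f' w') : Relation.ReflTransGen M.next w' w := by
  rcases hff.cases_head with heq | ⟨c, hc, hcf⟩
  · subst heq
    have := M.next_right_unique hw' hw
    subst this
    exact Relation.ReflTransGen.refl
  · have hcw : c = w' := M.next_right_unique hc hw'
    subst hcw
    exact hcf.tail hw

/-- a finite nonempty set that is totally preordered by `r` has a greatest element -/
lemma exists_rel_max {α : Type*} {r : α → α → Prop}
    (htrans : ∀ {a b c : α}, r a b → r b c → r a c) :
    ∀ (S : Finset α), S.Nonempty → (∀ a ∈ S, ∀ b ∈ S, r a b ∨ r b a) →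
      ∃ m ∈ S, ∀ a ∈ S, r a m := by
  classical
  intro S
  induction S using Finset.induction_on with
  | empty => intro h; simp at h
  | @insert x S hx ih =>
    intro _ htot
    by_cases hS : S.Nonempty
    · obtain ⟨m, hm, hmax⟩ := ih hS (fun a ha b hb =>
        htot a (Finset.mem_insert_of_mem ha) b (Finset.mem_insert_of_mem hb))
      rcases htot x (Finset.mem_insert_self x S) m (Finset.mem_insert_of_mem hm) with hxm | hmx
      · refine ⟨m, Finset.mem_insert_of_mem hm, ?_⟩
        intro a ha
        rcases Finset.mem_insert.1 ha with rfl | ha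
        · exact hxm
        · exact hmax a ha
      · refine ⟨x, Finset.mem_insert_self x S, ?_⟩
        intro a ha
        rcases Finset.mem_insert.1 ha with rfl | ha
        · rcases htot a (Finset.mem_insert_self a S) a (Finset.mem_insert_self a S) with h | h
          · exact h
          · exact h
        · exact htrans (hmax a ha) hmx
    · refine ⟨x, Finset.mem_insert_self x S, ?_⟩
      intro a ha
      rcases Finset.mem_insert.1 ha with rfl | ha
      · rcases htot a (Finset.mem_insert_self a S) a (Finset.mem_insert_self a S) with h | h
        · exact h
        · exact h
      · exact absurd ⟨a, ha⟩ hS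

lemma pathSem_append (M : MSC P A E) :
    ∀ (σ τ : PathExpr P A) (e g : E),
      pathSem M (σ ++ τ) e g ↔ ∃ f, pathSem M σ e f ∧ pathSem M τ f g := by
  intro σ
  induction σ with
  | nil =>
    intro τ e g
    constructor
    · intro h; exact ⟨e, rfl, h⟩
    · rintro ⟨f, rfl, h⟩; exact h
  | cons l σ ih =>
    intro τ e g
    constructor
    · rintro ⟨w, hl, hrest⟩
      obtain ⟨f, h1, h2⟩ := (ih τ w g).1 hrest
      exact ⟨f, ⟨w, hl, h1⟩, h2⟩
    · rintro ⟨f, ⟨w, hl, h1⟩, h2⟩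
      exact ⟨w, hl, (ih τ w g).2 ⟨f, h1, h2⟩⟩

lemma pathSem_singleton (M : MSC P A E) (l : PathLetter P A) (e g : E) :
    pathSem M [l] e g ↔ letterSem M l e g := by
  constructor
  · rintro ⟨w, hl, hw⟩
    cases hw
    exact hl
  · intro h; exact ⟨g, h, rfl⟩

lemma pathSem_pcomp (M : MSC P A E) :
    ∀ (δ : PathExpr P A) {f e : E}, pathSem M δ f e → pcomp δ (M.loc f) (M.loc e) := by
  intro δ
  induction δ with
  | nil => intro f e h; cases h; rfl
  | cons l δ ih =>
    rintro f e ⟨w, hl, hrest⟩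
    refine ⟨M.loc w, ?_, ih hrest⟩
    cases l with
    | next => exact M.next_loc hl
    | nextStar => exact loc_eq_of_rtg M hl
    | msg p q => exact ⟨hl.1, hl.2.1⟩
    | lab a => exact hl.1 ▸ rfl

lemma pcomp_left_unique :
    ∀ (δ : PathExpr P A) {r r' s : P}, pcomp δ r s → pcomp δ r' s → r = r' := by
  intro δ
  induction δ with
  | nil => intro r r' s h h'; exact h.trans h'.symm
  | cons l δ ih =>
    rintro r r' s ⟨y, hy, hrest⟩ ⟨y', hy', hrest'⟩
    cases l with
    | next => cases hy; cases hy'; exact ih hrest hrest'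
    | nextStar => cases hy; cases hy'; exact ih hrest hrest'
    | lab a => cases hy; cases hy'; exact ih hrest hrest'
    | msg p q => exact hy.1.trans hy'.1.symm

lemma pcomp_right_unique :
    ∀ (δ : PathExpr P A) {r s s' : P}, pcomp δ r s → pcomp δ r s' → s = s' := by
  intro δ
  induction δ with
  | nil => intro r s s' h h'; exact h.symm.trans h'
  | cons l δ ih =>
    rintro r s s' ⟨y, hy, hrest⟩ ⟨y', hy', hrest'⟩
    cases l with
    | next => cases hy; cases hy'; exact ih hrest hrest'
    | nextStar => cases hy; cases hy'; exact ih hrest hrest'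
    | lab a => cases hy; cases hy'; exact ih hrest hrest'
    | msg p q =>
      obtain ⟨h1, h2⟩ := hy
      obtain ⟨h1', h2'⟩ := hy'
      subst h2; subst h2'
      exact ih hrest hrest'

lemma sources_same_loc (M : MSC P A E) (δ : PathExpr P A) {f f' e : E}
    (h : pathSem M δ f e) (h' : pathSem M δ f' e) : M.loc f = M.loc f' :=
  pcomp_left_unique δ (pathSem_pcomp M δ h) (pathSem_pcomp M δ h')

lemma targets_same_loc (M : MSC P A E) (δ : PathExpr P A) {e g g' : E}
    (h : pathSem M δ e g) (h' : pathSem M δ e g') : M.loc g = M.loc g' :=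
  pcomp_right_unique δ (pathSem_pcomp M δ h) (pathSem_pcomp M δ h')

lemma isLast_total (M : MSC P A E) (δ : PathExpr P A) (e : E) :
    (∀ f, ¬ pathSem M δ f e) ∨ ∃ g, IsLast M δ e (ExtEv.evt g) := by
  classical
  haveI := M.fintypeE
  by_cases h : ∃ f, pathSem M δ f e
  · right
    obtain ⟨f₀, hf₀⟩ := h
    set S : Finset E := Finset.univ.filter (fun f => pathSem M δ f e) with hS
    have hmem : ∀ f, f ∈ S ↔ pathSem M δ f e := by
      intro f; simp [hS]
    have hne : S.Nonempty := ⟨f₀, (hmem f₀).2 hf₀⟩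
    have htot : ∀ a ∈ S, ∀ b ∈ S, Relation.ReflTransGen M.next a b ∨
        Relation.ReflTransGen M.next b a := by
      intro a ha b hb
      exact M.next_total a b (sources_same_loc M δ ((hmem a).1 ha) ((hmem b).1 hb))
    obtain ⟨m, hm, hmax⟩ := exists_rel_max (fun h1 h2 => h1.trans h2) S hne htot
    refine ⟨m, (hmem m).1 hm, ?_⟩
    intro f hf
    exact rtg_le M (hmax f ((hmem f).2 hf))
  · left
    push_neg at h
    exact h

lemma isFirst_total (M : MSC P A E) (τ : PathExpr P A) (e : E) :
    (∀ f, ¬ pathSem M τ e f) ∨ ∃ g, IsFirst M τ e (ExtEv.evt g) := by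
  classical
  haveI := M.fintypeE
  by_cases h : ∃ f, pathSem M τ e f
  · right
    obtain ⟨f₀, hf₀⟩ := h
    set S : Finset E := Finset.univ.filter (fun f => pathSem M τ e f) with hS
    have hmem : ∀ f, f ∈ S ↔ pathSem M τ e f := by
      intro f; simp [hS]
    have hne : S.Nonempty := ⟨f₀, (hmem f₀).2 hf₀⟩
    have htot : ∀ a ∈ S, ∀ b ∈ S, Relation.ReflTransGen M.next b a ∨
        Relation.ReflTransGen M.next a b := by
      intro a ha b hb
      exact (M.next_total b a (targets_same_loc M τ ((hmem b).1 hb) ((hmem a).1 ha)))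
    obtain ⟨m, hm, hmax⟩ := exists_rel_max
      (r := fun a b => Relation.ReflTransGen M.next b a)
      (fun h1 h2 => h2.trans h1) S hne htot
    refine ⟨m, (hmem m).1 hm, ?_⟩
    intro f hf
    exact rtg_le M (hmax f ((hmem f).2 hf))
  · left
    push_neg at h
    exact h

lemma isLast_unique (M : MSC P A E) (δ : PathExpr P A) {e g g' : E}
    (h : IsLast M δ e (ExtEv.evt g)) (h' : IsLast M δ e (ExtEv.evt g')) : g = g' :=
  M.causal_antisymm (h'.2 g h.1) (h.2 g' h'.1)

lemma isFirst_unique (M : MSC P A E) (τ : PathExpr P A) {e g g' : E}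
    (h : IsFirst M τ e (ExtEv.evt g)) (h' : IsFirst M τ e (ExtEv.evt g')) : g = g' :=
  M.causal_antisymm (h.2 g' h'.1) (h'.2 g h.1)

/-- Key monotonicity lemma: any `δ`-source of `f` is dominated by the greatest `δ`-source
of a later event `f'` on the same process. -/
lemma mono_last (M : MSC P A E) :
    ∀ (δ : PathExpr P A) {u f f' v : E}, pathSem M δ u f →
      Relation.ReflTransGen M.next f f' → pathSem M δ v f' →
      (∀ x, pathSem M δ x f' → M.le x v) → M.le u v := by
  intro δ
  induction δ using List.reverseRecOn with
  | nil =>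
    intro u f f' v hu hff hv hdom
    cases hu; cases hv
    exact rtg_le M hff
  | append_singleton δ₀ l ih =>
    intro u f f' v hu hff hv hdom
    obtain ⟨w, hw, hl⟩ := (pathSem_append M δ₀ [l] u f).1 hu
    rw [pathSem_singleton] at hl
    obtain ⟨w'', hw'', hl''⟩ := (pathSem_append M δ₀ [l] v f').1 hv
    rw [pathSem_singleton] at hl''
    cases l with
    | next =>
      have hww : Relation.ReflTransGen M.next w w'' := predMono M hl hl'' hff
      refine ih hw hww hw'' ?_
      intro x hx
      exact hdom x ((pathSem_append M δ₀ [PathLetter.next] x f').2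
        ⟨w'', hx, (pathSem_singleton M _ _ _).2 hl''⟩)
    | nextStar =>
      exact hdom u ((pathSem_append M δ₀ [PathLetter.nextStar] u f').2
        ⟨w, hw, (pathSem_singleton M _ _ _).2 (hl.trans hff)⟩)
    | lab a =>
      obtain ⟨hwf, hlab⟩ := hl
      obtain ⟨hwf'', hlab''⟩ := hl''
      refine ih (hwf ▸ hw) hff (hwf'' ▸ hw'') ?_
      intro x hx
      exact hdom x ((pathSem_append M δ₀ [PathLetter.lab a] x f').2
        ⟨f', hx, (pathSem_singleton M _ _ _).2 ⟨rfl, hwf'' ▸ hlab''⟩⟩)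
    | msg r s =>
      obtain ⟨hlw, hlf, hmsg⟩ := hl
      obtain ⟨hlw'', hlf'', hmsg''⟩ := hl''
      have hww : Relation.ReflTransGen M.next w w'' :=
        (M.fifo hmsg hmsg'' (hlw.trans hlw''.symm) (hlf.trans hlf''.symm)).2 hff
      refine ih hw hww hw'' ?_
      intro x hx
      exact hdom x ((pathSem_append M δ₀ [PathLetter.msg r s] x f').2
        ⟨w'', hx, (pathSem_singleton M _ _ _).2 ⟨hlw'', hlf'', hmsg''⟩⟩)

/-- Dual monotonicity: any `τ`-target of `f` dominates the least `τ`-target of an earlier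
event `f'` on the same process. -/
lemma mono_first (M : MSC P A E) :
    ∀ (τ : PathExpr P A) {u f f' v : E}, pathSem M τ f u →
      Relation.ReflTransGen M.next f' f → pathSem M τ f' v →
      (∀ x, pathSem M τ f' x → M.le v x) → M.le v u := by
  intro τ
  induction τ with
  | nil =>
    intro u f f' v hu hff hv hdom
    cases hu; cases hv
    exact rtg_le M hff
  | cons l τ₀ ih =>
    rintro u f f' v ⟨w, hl, hw⟩ hff ⟨w'', hl'', hw''⟩ hdom
    cases l with
    | next =>
      have hww : Relation.ReflTransGen M.next w'' w := succMono M hff hl hl''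
      refine ih hw hww hw'' ?_
      intro x hx
      exact hdom x ⟨w'', hl'', hx⟩
    | nextStar =>
      exact hdom u ⟨w, hff.trans hl, hw⟩
    | lab a =>
      obtain ⟨hwf, hlab⟩ := hl
      subst hwf
      obtain ⟨hwf'', hlab''⟩ := hl''
      subst hwf''
      refine ih hw hff hw'' ?_
      intro x hx
      exact hdom x ⟨f', ⟨rfl, hlab''⟩, hx⟩
    | msg r s =>
      obtain ⟨hlw, hlf, hmsg⟩ := hl
      obtain ⟨hlw'', hlf'', hmsg''⟩ := hl''
      have hww : Relation.ReflTransGen M.next w'' w :=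
        (M.fifo hmsg'' hmsg (hlw''.trans hlw.symm) (hlf''.trans hlf.symm)).1 hff
      refine ih hw hww hw'' ?_
      intro x hx
      exact hdom x ⟨w'', ⟨hlw'', hlf'', hmsg''⟩, hx⟩

/-! ### Value functions -/

/-- embed `Option Θ` (with `none = ⊤`) into `ExtEv Θ` -/
def otex : Option Θ → ExtEv Θ
  | none => ExtEv.top
  | some θ => ExtEv.evt θ

lemma otex_ne_bot : ∀ o : Option Θ, otex o ≠ ExtEv.bot := by
  intro o; cases o <;> exact fun h => by cases h

/-- the value `ξ₁(first_τ(e))`, with `⊤ ↦ none` -/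
noncomputable def fO (M : MSC P A E) (ξ₁ : E → Θ) (τ : PathExpr P A) (e : E) : Option Θ :=
  if h : ∃ g, IsFirst M τ e (ExtEv.evt g) then some (ξ₁ h.choose) else none

lemma fO_eq {M : MSC P A E} {ξ₁ : E → Θ} {τ : PathExpr P A} {e g : E}
    (h : IsFirst M τ e (ExtEv.evt g)) : fO M ξ₁ τ e = some (ξ₁ g) := by
  have hex : ∃ g', IsFirst M τ e (ExtEv.evt g') := ⟨g, h⟩
  rw [fO, dif_pos hex]
  exact congrArg some (congrArg ξ₁ (isFirst_unique M τ hex.choose_spec h))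

lemma fO_none {M : MSC P A E} {ξ₁ : E → Θ} {τ : PathExpr P A} {e : E}
    (h : ∀ f, ¬ pathSem M τ e f) : fO M ξ₁ τ e = none := by
  rw [fO, dif_neg]
  rintro ⟨g, hg⟩
  exact h g hg.1

lemma fO_none_elim {M : MSC P A E} {ξ₁ : E → Θ} {τ : PathExpr P A} {e : E}
    (h : fO M ξ₁ τ e = none) : ∀ f, ¬ pathSem M τ e f := by
  rcases isFirst_total M τ e with h' | ⟨g, hg⟩
  · exact h'
  · rw [fO_eq hg] at h; cases h

lemma fO_some_elim {M : MSC P A E} {ξ₁ : E → Θ} {τ : PathExpr P A} {e : E} {v : Θ}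
    (h : fO M ξ₁ τ e = some v) : ∃ g, IsFirst M τ e (ExtEv.evt g) ∧ v = ξ₁ g := by
  rcases isFirst_total M τ e with h' | ⟨g, hg⟩
  · rw [fO_none h'] at h; cases h
  · rw [fO_eq hg] at h
    exact ⟨g, hg, (Option.some.inj h).symm⟩

lemma fO_congr {M : MSC P A E} {ξ₁ : E → Θ} {τ τ' : PathExpr P A} {e e' : E}
    (h : ∀ g, pathSem M τ e g ↔ pathSem M τ' e' g) : fO M ξ₁ τ e = fO M ξ₁ τ' e' := by
  rcases isFirst_total M τ e with hn | ⟨g, hg⟩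
  · rw [fO_none hn, fO_none (fun f hf => hn f ((h f).2 hf))]
  · rw [fO_eq hg, fO_eq (show IsFirst M τ' e' (ExtEv.evt g) from
      ⟨(h g).1 hg.1, fun f hf => hg.2 f ((h f).2 hf)⟩)]

section FORec

variable {M : MSC P A E} {ξ₁ : E → Θ}

lemma F0 (e : E) : fO M ξ₁ [] e = some (ξ₁ e) :=
  fO_eq ⟨rfl, fun f hf => by cases hf; exact Relation.ReflTransGen.refl⟩

lemma Fnext_a {e y : E} (hy : M.next e y) (τ₀ : PathExpr P A) :
    fO M ξ₁ (PathLetter.next :: τ₀) e = fO M ξ₁ τ₀ y := by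
  apply fO_congr
  intro g
  constructor
  · rintro ⟨w, hw, hr⟩
    have : w = y := M.next_right_unique hw hy
    subst this; exact hr
  · intro hr; exact ⟨y, hy, hr⟩

lemma Fnext_b {e : E} (hy : ∀ y, ¬ M.next e y) (τ₀ : PathExpr P A) :
    fO M ξ₁ (PathLetter.next :: τ₀) e = none := by
  apply fO_none
  rintro f ⟨w, hw, _⟩
  exact hy w hw

lemma Flab_a {e : E} {b : A} (h : M.lab e = b) (τ₀ : PathExpr P A) :
    fO M ξ₁ (PathLetter.lab b :: τ₀) e = fO M ξ₁ τ₀ e := by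
  apply fO_congr
  intro g
  constructor
  · rintro ⟨w, ⟨hew, _⟩, hr⟩
    subst hew; exact hr
  · intro hr; exact ⟨e, ⟨rfl, h⟩, hr⟩

lemma Flab_b {e : E} {b : A} (h : M.lab e ≠ b) (τ₀ : PathExpr P A) :
    fO M ξ₁ (PathLetter.lab b :: τ₀) e = none := by
  apply fO_none
  rintro f ⟨w, ⟨_, hlab⟩, _⟩
  exact h hlab

lemma Fmsg_a {e f : E} {r s : P} (hm : M.msg e f) (h1 : M.loc e = r) (h2 : M.loc f = s)
    (τ₀ : PathExpr P A) :
    fO M ξ₁ (PathLetter.msg r s :: τ₀) e = fO M ξ₁ τ₀ f := by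
  apply fO_congr
  intro g
  constructor
  · rintro ⟨w, ⟨_, _, hw⟩, hr⟩
    have : w = f := (M.msg_unique hw hm (Or.inl rfl)).2
    subst this; exact hr
  · intro hr; exact ⟨f, ⟨h1, h2, hm⟩, hr⟩

lemma Fmsg_b {e : E} {r s : P} (h : ¬ ∃ f, M.msg e f ∧ M.loc e = r ∧ M.loc f = s)
    (τ₀ : PathExpr P A) :
    fO M ξ₁ (PathLetter.msg r s :: τ₀) e = none := by
  apply fO_none
  rintro g ⟨w, ⟨hr, hs, hw⟩, _⟩
  exact h ⟨w, hw, hr, hs⟩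

lemma Fstar_a {e : E} {v : Θ} {τ₀ : PathExpr P A} (h : fO M ξ₁ τ₀ e = some v) :
    fO M ξ₁ (PathLetter.nextStar :: τ₀) e = some v := by
  obtain ⟨g, hg, rfl⟩ := fO_some_elim h
  apply fO_eq
  refine ⟨⟨e, Relation.ReflTransGen.refl, hg.1⟩, ?_⟩
  rintro x ⟨f₁, hf₁, hx⟩
  exact mono_first M τ₀ hx hf₁ hg.1 hg.2

lemma Fstar_b {e y : E} {τ₀ : PathExpr P A} (h : fO M ξ₁ τ₀ e = none) (hy : M.next e y) :
    fO M ξ₁ (PathLetter.nextStar :: τ₀) e = fO M ξ₁ (PathLetter.nextStar :: τ₀) y := by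
  apply fO_congr
  intro g
  constructor
  · rintro ⟨f₁, hf₁, hr⟩
    rcases hf₁.cases_head with heq | ⟨c, hc, hcr⟩
    · subst heq; exact absurd hr (fO_none_elim h g)
    · have : c = y := M.next_right_unique hc hy
      subst this
      exact ⟨f₁, hcr, hr⟩
  · rintro ⟨f₁, hf₁, hr⟩
    exact ⟨f₁, Relation.ReflTransGen.head hy hf₁, hr⟩

lemma Fstar_c {e : E} {τ₀ : PathExpr P A} (h : fO M ξ₁ τ₀ e = none)
    (hy : ∀ y, ¬ M.next e y) :
    fO M ξ₁ (PathLetter.nextStar :: τ₀) e = none := by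
  apply fO_none
  rintro g ⟨f₁, hf₁, hr⟩
  rcases hf₁.cases_head with heq | ⟨c, hc, _⟩
  · subst heq; exact fO_none_elim h g hr
  · exact hy c hc

end FORec

/-- the value `ν(last_δ(e))` where `ν(g) = otex (ξ₁(first_{π'}(g)))`, with `⊥ ↦ ⊥`. -/
noncomputable def lZ (M : MSC P A E) (ξ₁ : E → Θ) (π' δ : PathExpr P A) (e : E) : ExtEv Θ :=
  if h : ∃ g, IsLast M δ e (ExtEv.evt g) then otex (fO M ξ₁ π' h.choose) else ExtEv.bot

lemma lZ_eq {M : MSC P A E} {ξ₁ : E → Θ} {π' δ : PathExpr P A} {e g : E}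
    (h : IsLast M δ e (ExtEv.evt g)) : lZ M ξ₁ π' δ e = otex (fO M ξ₁ π' g) := by
  have hex : ∃ g', IsLast M δ e (ExtEv.evt g') := ⟨g, h⟩
  rw [lZ, dif_pos hex]
  exact congrArg (fun x => otex (fO M ξ₁ π' x)) (isLast_unique M δ hex.choose_spec h)

lemma lZ_bot {M : MSC P A E} {ξ₁ : E → Θ} {π' δ : PathExpr P A} {e : E}
    (h : ∀ f, ¬ pathSem M δ f e) : lZ M ξ₁ π' δ e = ExtEv.bot := by
  rw [lZ, dif_neg]
  rintro ⟨g, hg⟩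
  exact h g hg.1

lemma lZ_bot_elim {M : MSC P A E} {ξ₁ : E → Θ} {π' δ : PathExpr P A} {e : E}
    (h : lZ M ξ₁ π' δ e = ExtEv.bot) : ∀ f, ¬ pathSem M δ f e := by
  rcases isLast_total M δ e with h' | ⟨g, hg⟩
  · exact h'
  · rw [lZ_eq hg] at h
    exact absurd h (otex_ne_bot _)

lemma lZ_ne_bot_elim {M : MSC P A E} {ξ₁ : E → Θ} {π' δ : PathExpr P A} {e : E}
    (h : lZ M ξ₁ π' δ e ≠ ExtEv.bot) : ∃ g, IsLast M δ e (ExtEv.evt g) := by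
  rcases isLast_total M δ e with h' | hg
  · exact absurd (lZ_bot h') h
  · exact hg

lemma lZ_congr {M : MSC P A E} {ξ₁ : E → Θ} {π' δ δ' : PathExpr P A} {e e' : E}
    (h : ∀ f, pathSem M δ f e ↔ pathSem M δ' f e') : lZ M ξ₁ π' δ e = lZ M ξ₁ π' δ' e' := by
  rcases isLast_total M δ e with hn | ⟨g, hg⟩
  · rw [lZ_bot hn, lZ_bot (fun f hf => hn f ((h f).2 hf))]
  · rw [lZ_eq hg, lZ_eq (show IsLast M δ' e' (ExtEv.evt g) from
      ⟨(h g).1 hg.1, fun f hf => hg.2 f ((h f).2 hf)⟩)]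

section LZRec

variable {M : MSC P A E} {ξ₁ : E → Θ} {π' : PathExpr P A}

lemma Znil (e : E) : lZ M ξ₁ π' [] e = otex (fO M ξ₁ π' e) :=
  lZ_eq ⟨rfl, fun f hf => by cases hf; exact Relation.ReflTransGen.refl⟩

lemma Znext_a {x e : E} (hx : M.next x e) (δ : PathExpr P A) :
    lZ M ξ₁ π' (δ ++ [PathLetter.next]) e = lZ M ξ₁ π' δ x := by
  apply lZ_congr
  intro f
  rw [pathSem_append M δ [PathLetter.next] f e]
  constructor
  · rintro ⟨w, hw, hl⟩
    rw [pathSem_singleton] at hl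
    have : w = x := M.next_left_unique hl hx
    subst this; exact hw
  · intro hw
    exact ⟨x, hw, (pathSem_singleton M _ _ _).2 hx⟩

lemma Znext_b {e : E} (hx : ∀ x, ¬ M.next x e) (δ : PathExpr P A) :
    lZ M ξ₁ π' (δ ++ [PathLetter.next]) e = ExtEv.bot := by
  apply lZ_bot
  intro f hf
  obtain ⟨w, _, hl⟩ := (pathSem_append M δ [PathLetter.next] f e).1 hf
  rw [pathSem_singleton] at hl
  exact hx w hl

lemma Zlab_a {e : E} {b : A} (h : M.lab e = b) (δ : PathExpr P A) :
    lZ M ξ₁ π' (δ ++ [PathLetter.lab b]) e = lZ M ξ₁ π' δ e := by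
  apply lZ_congr
  intro f
  rw [pathSem_append M δ [PathLetter.lab b] f e]
  constructor
  · rintro ⟨w, hw, hl⟩
    rw [pathSem_singleton] at hl
    obtain ⟨hwe, _⟩ := hl
    subst hwe; exact hw
  · intro hw
    exact ⟨e, hw, (pathSem_singleton M _ _ _).2 ⟨rfl, h⟩⟩

lemma Zlab_b {e : E} {b : A} (h : M.lab e ≠ b) (δ : PathExpr P A) :
    lZ M ξ₁ π' (δ ++ [PathLetter.lab b]) e = ExtEv.bot := by
  apply lZ_bot
  intro f hf
  obtain ⟨w, _, hl⟩ := (pathSem_append M δ [PathLetter.lab b] f e).1 hf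
  rw [pathSem_singleton] at hl
  obtain ⟨hwe, hlab⟩ := hl
  subst hwe
  exact h hlab

lemma Zmsg_a {x e : E} {r s : P} (hm : M.msg x e) (h1 : M.loc x = r) (h2 : M.loc e = s)
    (δ : PathExpr P A) :
    lZ M ξ₁ π' (δ ++ [PathLetter.msg r s]) e = lZ M ξ₁ π' δ x := by
  apply lZ_congr
  intro f
  rw [pathSem_append M δ [PathLetter.msg r s] f e]
  constructor
  · rintro ⟨w, hw, hl⟩
    rw [pathSem_singleton] at hl
    obtain ⟨_, _, hmsg⟩ := hl
    have : w = x := (M.msg_unique hmsg hm (Or.inr (Or.inr (Or.inr rfl)))).1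
    subst this; exact hw
  · intro hw
    exact ⟨x, hw, (pathSem_singleton M _ _ _).2 ⟨h1, h2, hm⟩⟩

lemma Zmsg_b {e : E} {r s : P} (h : ¬ ∃ x, M.msg x e ∧ M.loc x = r ∧ M.loc e = s)
    (δ : PathExpr P A) :
    lZ M ξ₁ π' (δ ++ [PathLetter.msg r s]) e = ExtEv.bot := by
  apply lZ_bot
  intro f hf
  obtain ⟨w, _, hl⟩ := (pathSem_append M δ [PathLetter.msg r s] f e).1 hf
  rw [pathSem_singleton] at hl
  obtain ⟨hr, hs, hmsg⟩ := hl
  exact h ⟨w, hmsg, hr, hs⟩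

lemma Zstar_a {e : E} {δ : PathExpr P A} (h : lZ M ξ₁ π' δ e ≠ ExtEv.bot) :
    lZ M ξ₁ π' (δ ++ [PathLetter.nextStar]) e = lZ M ξ₁ π' δ e := by
  obtain ⟨g, hg⟩ := lZ_ne_bot_elim h
  rw [lZ_eq hg]
  apply lZ_eq
  refine ⟨(pathSem_append M δ [PathLetter.nextStar] g e).2
    ⟨e, hg.1, (pathSem_singleton M _ _ _).2 Relation.ReflTransGen.refl⟩, ?_⟩
  intro x hx
  obtain ⟨f₁, hf₁, hstar⟩ := (pathSem_append M δ [PathLetter.nextStar] x e).1 hx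
  rw [pathSem_singleton] at hstar
  exact mono_last M δ hf₁ hstar hg.1 hg.2

lemma Zstar_b {x e : E} {δ : PathExpr P A} (h : lZ M ξ₁ π' δ e = ExtEv.bot)
    (hx : M.next x e) :
    lZ M ξ₁ π' (δ ++ [PathLetter.nextStar]) e = lZ M ξ₁ π' (δ ++ [PathLetter.nextStar]) x := by
  apply lZ_congr
  intro f
  rw [pathSem_append M δ _ f e, pathSem_append M δ _ f x]
  constructor
  · rintro ⟨w, hw, hl⟩
    rw [pathSem_singleton] at hl
    rcases hl.cases_tail with heq | ⟨c, hc, hce⟩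
    · subst heq; exact absurd hw (lZ_bot_elim h f)
    · have : c = x := M.next_left_unique hce hx
      subst this
      exact ⟨w, hw, (pathSem_singleton M _ _ _).2 hc⟩
  · rintro ⟨w, hw, hl⟩
    rw [pathSem_singleton] at hl
    exact ⟨w, hw, (pathSem_singleton M _ _ _).2 (hl.tail hx)⟩

lemma Zstar_c {e : E} {δ : PathExpr P A} (h : lZ M ξ₁ π' δ e = ExtEv.bot)
    (hx : ∀ x, ¬ M.next x e) :
    lZ M ξ₁ π' (δ ++ [PathLetter.nextStar]) e = ExtEv.bot := by
  apply lZ_bot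
  intro f hf
  obtain ⟨w, hw, hl⟩ := (pathSem_append M δ _ f e).1 hf
  rw [pathSem_singleton] at hl
  rcases hl.cases_tail with heq | ⟨c, _, hce⟩
  · subst heq; exact lZ_bot_elim h f hw
  · exact hx c hce

end LZRec

lemma bridge {π π' : PathExpr P A} (M : MSC P A E) (ξ₁ : E → Θ) {e : E} {x : ExtEv E}
    (hx : IsFa M π π' e x) : extMap ξ₁ x = lZ M ξ₁ π' π e := by
  rcases hx with ⟨hbot, rfl⟩ | ⟨g, hg, hfirst⟩
  · rw [lZ_bot hbot]; rfl
  · rw [lZ_eq hg]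
    cases x with
    | bot => exact absurd hfirst id
    | top => rw [fO_none hfirst]; rfl
    | evt hh => rw [fO_eq hfirst]; rfl

lemma isFa_exists (π π' : PathExpr P A) (M : MSC P A E) (e : E) :
    ∃ x, IsFa M π π' e x := by
  rcases isLast_total M π e with hn | ⟨g, hg⟩
  · exact ⟨ExtEv.bot, Or.inl ⟨hn, rfl⟩⟩
  · rcases isFirst_total M π' g with hn' | ⟨h, hh⟩
    · exact ⟨ExtEv.top, Or.inr ⟨g, hg, hn'⟩⟩
    · exact ⟨ExtEv.evt h, Or.inr ⟨g, hg, hh⟩⟩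


/-! ### The machine -/

def extEvEquiv (Θ : Type) : ExtEv Θ ≃ Option (Option Θ) where
  toFun x := match x with
    | .bot => none
    | .top => some none
    | .evt θ => some (some θ)
  invFun x := match x with
    | none => .bot
    | some none => .top
    | some (some θ) => .evt θ
  left_inv := by intro x; cases x <;> rfl
  right_inv := by intro x; rcases x with _ | (_ | _) <;> rfl

noncomputable instance instFintypeExtEv (Θ : Type) [Fintype Θ] : Fintype (ExtEv Θ) :=
  Fintype.ofEquiv _ (extEvEquiv Θ).symm

lemma take_succ_get {α : Type*} (l : List α) (i : ℕ) (h : i < l.length) :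
    l.take (i + 1) = l.take i ++ [l.get ⟨i, h⟩] := by
  rw [List.take_succ, List.getElem?_eq_getElem h]
  rfl

variable (Θ : Type) (π π' : PathExpr P A) (q : P)

/-- forward state component: for each prefix `π.take i` of `π`, the value
`ν(last_{π.take i}(e))` -/
abbrev SZV := Fin (π.length + 1) → ExtEv Θ

/-- backward state component: for each suffix `π'.drop j` of `π'`, the value
`ξ₁(first_{π'.drop j}(e))` -/
abbrev SWV := Fin (π'.length + 1) → Option Θ

abbrev StV := Option (SZV (P := P) (A := A) Θ π × SWV (P := P) (A := A) Θ π')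

/-- local consistency conditions for the transition taken at a single event -/
structure TransOK (pr : P) (s : StV Θ π π')
    (act : CAct P (A × (Θ × ExtEv Θ)) (SZV (P := P) (A := A) Θ π × SWV (P := P) (A := A) Θ π'))
    (z : SZV (P := P) (A := A) Θ π) (w : SWV (P := P) (A := A) Θ π') : Prop where
  wbase : w ⟨π'.length, by omega⟩ = some act.labelOf.2.1
  wlab : ∀ (j : ℕ) (h : j < π'.length) (b : A), π'.get ⟨j, h⟩ = PathLetter.lab b →
    w ⟨j, by omega⟩ = if act.labelOf.1 = b then w ⟨j+1, by omega⟩ else none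
  wmsg_send : ∀ (j : ℕ) (h : j < π'.length) (r s' : P), π'.get ⟨j, h⟩ = PathLetter.msg r s' →
    ∀ a' m t, act = CAct.send a' m t →
      w ⟨j, by omega⟩ = if pr = r ∧ t = s' then m.2 ⟨j+1, by omega⟩ else none
  wmsg_other : ∀ (j : ℕ) (h : j < π'.length) (r s' : P), π'.get ⟨j, h⟩ = PathLetter.msg r s' →
    (∀ a' m t, act ≠ CAct.send a' m t) → w ⟨j, by omega⟩ = none
  wnext_back : ∀ (j : ℕ) (h : j < π'.length), π'.get ⟨j, h⟩ = PathLetter.next →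
    ∀ z₀ w₀, s = some (z₀, w₀) → w₀ ⟨j, by omega⟩ = w ⟨j+1, by omega⟩
  wstar_back : ∀ (j : ℕ) (h : j < π'.length), π'.get ⟨j, h⟩ = PathLetter.nextStar →
    ∀ z₀ w₀, s = some (z₀, w₀) →
      w₀ ⟨j, by omega⟩ = if w₀ ⟨j+1, by omega⟩ ≠ none then w₀ ⟨j+1, by omega⟩ else w ⟨j, by omega⟩
  zbase : z ⟨0, by omega⟩ = otex (w ⟨0, by omega⟩)
  znext_some : ∀ (i : ℕ) (h : i < π.length), π.get ⟨i, h⟩ = PathLetter.next →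
    ∀ z₀ w₀, s = some (z₀, w₀) → z ⟨i+1, by omega⟩ = z₀ ⟨i, by omega⟩
  znext_none : ∀ (i : ℕ) (h : i < π.length), π.get ⟨i, h⟩ = PathLetter.next →
    s = none → z ⟨i+1, by omega⟩ = ExtEv.bot
  zlab : ∀ (i : ℕ) (h : i < π.length) (b : A), π.get ⟨i, h⟩ = PathLetter.lab b →
    z ⟨i+1, by omega⟩ = if act.labelOf.1 = b then z ⟨i, by omega⟩ else ExtEv.bot
  zmsg_recv : ∀ (i : ℕ) (h : i < π.length) (r s' : P), π.get ⟨i, h⟩ = PathLetter.msg r s' →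
    ∀ a' m t, act = CAct.recv a' m t →
      z ⟨i+1, by omega⟩ = if t = r ∧ pr = s' then m.1 ⟨i, by omega⟩ else ExtEv.bot
  zmsg_other : ∀ (i : ℕ) (h : i < π.length) (r s' : P), π.get ⟨i, h⟩ = PathLetter.msg r s' →
    (∀ a' m t, act ≠ CAct.recv a' m t) → z ⟨i+1, by omega⟩ = ExtEv.bot
  zstar_val : ∀ (i : ℕ) (h : i < π.length), π.get ⟨i, h⟩ = PathLetter.nextStar →
    z ⟨i, by omega⟩ ≠ ExtEv.bot → z ⟨i+1, by omega⟩ = z ⟨i, by omega⟩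
  zstar_some : ∀ (i : ℕ) (h : i < π.length), π.get ⟨i, h⟩ = PathLetter.nextStar →
    z ⟨i, by omega⟩ = ExtEv.bot → ∀ z₀ w₀, s = some (z₀, w₀) →
      z ⟨i+1, by omega⟩ = z₀ ⟨i+1, by omega⟩
  zstar_none : ∀ (i : ℕ) (h : i < π.length), π.get ⟨i, h⟩ = PathLetter.nextStar →
    z ⟨i, by omega⟩ = ExtEv.bot → s = none → z ⟨i+1, by omega⟩ = ExtEv.bot
  msgout : ∀ a' m t, act = CAct.send a' m t → m.1 = z ∧ t ≠ pr
  msgin : ∀ a' m t, act = CAct.recv a' m t → m.2 = w ∧ t ≠ pr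
  qcheck : pr = q → act.labelOf.2.2 = z ⟨π.length, by omega⟩

/-- conditions on the final state of a (nonempty) process -/
def FinalW (w : SWV (P := P) (A := A) Θ π') : Prop :=
  ∀ (j : ℕ) (h : j < π'.length),
    (π'.get ⟨j, h⟩ = PathLetter.next → w ⟨j, by omega⟩ = none) ∧
    (π'.get ⟨j, h⟩ = PathLetter.nextStar → w ⟨j, by omega⟩ = w ⟨j+1, by omega⟩)

noncomputable def theCFM [Fintype Θ] : CFM P (A × (Θ × ExtEv Θ)) where
  Msg := SZV (P := P) (A := A) Θ π × SWV (P := P) (A := A) Θ π'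
  msgFin := by infer_instance
  S := StV Θ π π'
  sFin := by infer_instance
  ι := fun _ => none
  Δ := fun pr => {t | ∃ z w, t.2.2 = some (z, w) ∧ TransOK Θ π π' q pr t.1 t.2.1 z w}
  Acc := {s | ∀ pr, s pr = none ∨ ∃ zw, s pr = some zw ∧ FinalW Θ π' zw.2}
  wf_send := by
    rintro pr s a m t s' ⟨z, w, _, htr⟩
    exact (htr.msgout a m t rfl).2
  wf_recv := by
    rintro pr s a m t s' ⟨z, w, _, htr⟩
    exact (htr.msgin a m t rfl).2

/-- semantic forward vector at an event -/
noncomputable def zvec (M : MSC P A E) (ξ₁ : E → Θ) (e : E) : SZV (P := P) (A := A) Θ π :=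
  fun i => lZ M ξ₁ π' (π.take i.val) e

/-- semantic backward vector at an event -/
noncomputable def wvec (M : MSC P A E) (ξ₁ : E → Θ) (e : E) : SWV (P := P) (A := A) Θ π' :=
  fun j => fO M ξ₁ (π'.drop j.val) e


/-! ### Structural lemmas -/

@[simp] lemma relabel_next {B : Type} (M : MSC P A E) (μ : E → B) :
    (M.relabel μ).next = M.next := rfl
@[simp] lemma relabel_msg {B : Type} (M : MSC P A E) (μ : E → B) :
    (M.relabel μ).msg = M.msg := rfl
@[simp] lemma relabel_loc {B : Type} (M : MSC P A E) (μ : E → B) :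
    (M.relabel μ).loc = M.loc := rfl
@[simp] lemma relabel_lab {B : Type} (M : MSC P A E) (μ : E → B) :
    (M.relabel μ).lab = μ := rfl

lemma no_succ_unique (M : MSC P A E) {e e' : E} (he : ∀ f, ¬ M.next e f)
    (he' : ∀ f, ¬ M.next e' f) (hloc : M.loc e = M.loc e') : e = e' := by
  rcases M.next_total e e' hloc with h | h
  · rcases h.cases_head with heq | ⟨c, hc, _⟩
    · exact heq
    · exact absurd hc (he c)
  · rcases h.cases_head with heq | ⟨c, hc, _⟩
    · exact heq.symm
    · exact absurd hc (he' c)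

lemma not_send_of_recv (M : MSC P A E) {g e : E} (h : M.msg g e) : ∀ f, ¬ M.msg e f := by
  intro f hf
  obtain ⟨heg, _⟩ := M.msg_unique hf h (Or.inr (Or.inl rfl))
  subst heg
  exact M.msg_loc h rfl

lemma exists_final (M : MSC P A E) (pr : P) (h : ∃ e, M.loc e = pr) :
    ∃ e, M.loc e = pr ∧ ∀ f, ¬ M.next e f := by
  classical
  haveI := M.fintypeE
  obtain ⟨e₀, he₀⟩ := h
  set S : Finset E := Finset.univ.filter (fun f => M.loc f = pr) with hS
  have hmem : ∀ f, f ∈ S ↔ M.loc f = pr := by intro f; simp [hS]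
  obtain ⟨m, hm, hmax⟩ := exists_rel_max (r := Relation.ReflTransGen M.next)
    (fun h1 h2 => h1.trans h2) S ⟨e₀, (hmem e₀).2 he₀⟩
    (fun a ha b hb => M.next_total a b (((hmem a).1 ha).trans ((hmem b).1 hb).symm))
  refine ⟨m, (hmem m).1 hm, ?_⟩
  intro f hf
  have hfS : f ∈ S := (hmem f).2 ((M.next_loc hf).symm.trans ((hmem m).1 hm))
  have h1 : Relation.ReflTransGen M.next f m := hmax f hfS
  have h2 : Relation.ReflTransGen M.next m f := Relation.ReflTransGen.single hf
  have : m = f := rtg_next_antisymm M h2 h1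
  subst this
  exact M.next_irrefl m hf

/-! ### Soundness -/

lemma main_sound {Θ : Type} [Fintype Θ] (q : P) (π π' : PathExpr P A) {E : Type}
    (M : MSC P A E) (ξ : E → Θ × ExtEv Θ)
    (h : AcceptsExt (theCFM Θ π π' q) M ξ) :
    ∀ e, M.loc e = q → (ξ e).2 = lZ M (fun g => (ξ g).1) π' π e := by
  classical
  haveI := M.fintypeE
  set ξ₁ : E → Θ := fun g => (ξ g).1 with hxi1
  obtain ⟨ρ, hrun, hac⟩ := h
  obtain ⟨hΔ, hlab, hinit, hnextst, hint, hmsgr⟩ := hrun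
  simp only [relabel_next, relabel_msg, relabel_loc, relabel_lab] at hlab hinit hnextst hint hmsgr
  have hΔ' : ∀ e, ∃ z w, (ρ e).2.2 = some (z, w) ∧
      TransOK Θ π π' q (M.loc e) (ρ e).1 (ρ e).2.1 z w := fun e => hΔ e
  choose zout wout hsome htr using hΔ'
  have hlabel : ∀ e, ((ρ e).2.1).labelOf = (M.lab e, ξ e) := fun e => hlab e
  have hlab1 : ∀ e, ((ρ e).2.1).labelOf.1 = M.lab e := fun e => by rw [hlabel e]
  have hstate : ∀ {e y}, M.next e y → (ρ y).1 = some (zout e, wout e) := by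
    intro e y hy
    rw [← hnextst e y hy]
    exact hsome e
  -- final states satisfy the final conditions
  obtain ⟨sacc, hsaccA, hsx⟩ := hac
  simp only [relabel_next, relabel_msg, relabel_loc, relabel_lab] at hsx
  have hiota : ∀ e, (¬ ∃ x, M.next x e) → (ρ e).1 = none := fun e h => hinit e h
  have hsaccA' : ∀ pr, sacc pr = none ∨
      ∃ zw, sacc pr = some zw ∧ FinalW Θ π' zw.2 := fun pr => hsaccA pr
  have finalW : ∀ e, (∀ f, ¬ M.next e f) → FinalW Θ π' (wout e) := by
    intro e hfin
    obtain ⟨e', hloc', hfin', hs⟩ := (hsx (M.loc e)).1 ⟨e, rfl⟩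
    have hee : e' = e := no_succ_unique M (fun f hf => hfin' ⟨f, hf⟩) hfin hloc'
    subst hee
    rcases hsaccA' (M.loc e') with hnone | ⟨zw, hzw, hF⟩
    · rw [hs, hsome e'] at hnone; cases hnone
    · rw [hs, hsome e'] at hzw
      have : (zout e', wout e') = zw := Option.some.inj hzw
      rw [← this] at hF
      exact hF
  -- action-shape facts
  have hnot_send : ∀ e, (¬ ∃ f, M.msg e f) → ∀ (a' : A × (Θ × ExtEv Θ)) m t,
      (ρ e).2.1 ≠ CAct.send a' m t := by
    intro e hno a' m t heq
    by_cases hr : ∃ g, M.msg g e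
    · obtain ⟨g, hg⟩ := hr
      obtain ⟨m', _, hrecv⟩ := hmsgr g e hg
      rw [heq] at hrecv
      simp at hrecv
    · obtain ⟨a0, hint0⟩ := hint e hno hr
      rw [heq] at hint0
      simp at hint0
  have hnot_recv : ∀ e, (¬ ∃ g, M.msg g e) → ∀ (a' : A × (Θ × ExtEv Θ)) m t,
      (ρ e).2.1 ≠ CAct.recv a' m t := by
    intro e hno a' m t heq
    by_cases hs : ∃ f, M.msg e f
    · obtain ⟨f, hf⟩ := hs
      obtain ⟨m', hsend, _⟩ := hmsgr e f hf
      rw [heq] at hsend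
      simp at hsend
    · obtain ⟨a0, hint0⟩ := hint e hs hno
      rw [heq] at hint0
      simp at hint0
  -- measures
  set fut : E → ℕ := fun e => (Finset.univ.filter (fun g => M.le e g)).card with hfut
  have hstep_le : ∀ {e f}, (M.next e f ∨ M.msg e f) → M.le e f :=
    fun h => Relation.ReflTransGen.single h
  have hfutlt : ∀ {e f}, (M.next e f ∨ M.msg e f) → fut f < fut e := by
    intro e f hef
    apply Finset.card_lt_card
    rw [Finset.ssubset_iff_of_subset]
    · refine ⟨e, ?_, ?_⟩
      · simp only [Finset.mem_filter, Finset.mem_univ, true_and]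
        exact Relation.ReflTransGen.refl
      · simp only [Finset.mem_filter, Finset.mem_univ, true_and]
        intro hfe
        have : e = f := M.causal_antisymm (hstep_le hef) hfe
        subst this
        rcases hef with hh | hh
        · exact M.next_irrefl e hh
        · exact M.msg_loc hh rfl
    · intro g hg
      simp only [Finset.mem_filter, Finset.mem_univ, true_and] at *
      exact (hstep_le hef).trans hg
  have hfutpos : ∀ e, 0 < fut e := by
    intro e
    apply Finset.card_pos.2
    refine ⟨e, ?_⟩
    simp only [Finset.mem_filter, Finset.mem_univ, true_and]
    exact Relation.ReflTransGen.refl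
  set past : E → ℕ := fun e => (Finset.univ.filter (fun g => M.le g e)).card with hpast
  have hpastlt : ∀ {f e}, (M.next f e ∨ M.msg f e) → past f < past e := by
    intro f e hef
    apply Finset.card_lt_card
    rw [Finset.ssubset_iff_of_subset]
    · refine ⟨e, ?_, ?_⟩
      · simp only [Finset.mem_filter, Finset.mem_univ, true_and]
        exact Relation.ReflTransGen.refl
      · simp only [Finset.mem_filter, Finset.mem_univ, true_and]
        intro hfe
        have : f = e := M.causal_antisymm (hstep_le hef) hfe
        subst this
        rcases hef with hh | hh
        · exact M.next_irrefl f hh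
        · exact M.msg_loc hh rfl
    · intro g hg
      simp only [Finset.mem_filter, Finset.mem_univ, true_and] at *
      exact hg.trans (hstep_le hef)
  have hpastpos : ∀ e, 0 < past e := by
    intro e
    apply Finset.card_pos.2
    refine ⟨e, ?_⟩
    simp only [Finset.mem_filter, Finset.mem_univ, true_and]
    exact Relation.ReflTransGen.refl
  -- backward pass: w components are forced
  have wbasecase : ∀ e, wout e ⟨π'.length, by omega⟩ = fO M ξ₁ (π'.drop π'.length) e := by
    intro e
    rw [List.drop_length, F0]
    have hb := (htr e).wbase
    erw [hlabel e] at hb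
    exact hb
  have wmain : ∀ n e, fut e ≤ n → ∀ (k j : ℕ) (hj : j ≤ π'.length), π'.length - j ≤ k →
      wout e ⟨j, by omega⟩ = fO M ξ₁ (π'.drop j) e := by
    intro n
    induction n with
    | zero =>
      intro e he
      exact absurd he (by have := hfutpos e; omega)
    | succ n ihn =>
      intro e he k
      induction k with
      | zero =>
        intro j hj hk
        have hje : j = π'.length := by omega
        subst hje
        exact wbasecase e
      | succ k ihk =>
        intro j hj hk
        rcases Nat.eq_or_lt_of_le hj with hje | hjlt
        · subst hje
          exact wbasecase e
        · have hdrop : π'.drop j = π'.get ⟨j, hjlt⟩ :: π'.drop (j+1) := by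
            rw [List.drop_eq_getElem_cons hjlt]
            rfl
          have ihk' : wout e ⟨j+1, by omega⟩ = fO M ξ₁ (π'.drop (j+1)) e :=
            ihk (j+1) (by omega) (by omega)
          rcases hgl : π'.get ⟨j, hjlt⟩ with _ | _ | ⟨r, s'⟩ | b
          · -- next
            by_cases hsucc : ∃ y, M.next e y
            · obtain ⟨y, hy⟩ := hsucc
              have hb := (htr y).wnext_back j hjlt hgl (zout e) (wout e) (hstate hy)
              rw [hdrop, hgl, Fnext_a hy]
              rw [hb]
              exact ihn y (by have := hfutlt (Or.inl hy); omega) π'.length (j+1)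
                (by omega) (by omega)
            · push_neg at hsucc
              rw [hdrop, hgl, Fnext_b hsucc]
              exact (finalW e hsucc j hjlt).1 hgl
          · -- nextStar
            by_cases hsucc : ∃ y, M.next e y
            · obtain ⟨y, hy⟩ := hsucc
              have hb := (htr y).wstar_back j hjlt hgl (zout e) (wout e) (hstate hy)
              have hyj : wout y ⟨j, by omega⟩ = fO M ξ₁ (π'.drop j) y :=
                ihn y (by have := hfutlt (Or.inl hy); omega) π'.length j (by omega) (by omega)
              rw [hdrop, hgl]
              rcases hfo : fO M ξ₁ (π'.drop (j+1)) e with _ | v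
              · rw [Fstar_b hfo hy]
                rw [hb, if_neg (by rw [ihk', hfo]; simp)]
                rw [hyj, hdrop, hgl]
              · rw [Fstar_a hfo]
                rw [hb, if_pos (by rw [ihk', hfo]; simp)]
                rw [ihk', hfo]
            · push_neg at hsucc
              have hb := (finalW e hsucc j hjlt).2 hgl
              rw [hdrop, hgl]
              rcases hfo : fO M ξ₁ (π'.drop (j+1)) e with _ | v
              · rw [Fstar_c hfo hsucc, hb, ihk', hfo]
              · rw [Fstar_a hfo, hb, ihk', hfo]
          · -- msg r s'
            by_cases hsend : ∃ f, M.msg e f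
            · obtain ⟨f, hf⟩ := hsend
              obtain ⟨m, hse, hre⟩ := hmsgr e f hf
              have hb := (htr e).wmsg_send j hjlt r s' hgl _ m _ hse
              have hm2 : m.2 = wout f := ((htr f).msgin _ m _ hre).1
              by_cases hc : M.loc e = r ∧ M.loc f = s'
              · rw [if_pos hc] at hb
                rw [hdrop, hgl, Fmsg_a hf hc.1 hc.2]
                rw [hb, hm2]
                exact ihn f (by have := hfutlt (Or.inr hf); omega) π'.length (j+1)
                  (by omega) (by omega)
              · rw [if_neg hc] at hb
                rw [hdrop, hgl, Fmsg_b, hb]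
                rintro ⟨x, hx, h1, h2⟩
                have : x = f := (M.msg_unique hx hf (Or.inl rfl)).2
                subst this
                exact hc ⟨h1, h2⟩
            · have hb := (htr e).wmsg_other j hjlt r s' hgl (hnot_send e hsend)
              rw [hdrop, hgl, Fmsg_b, hb]
              rintro ⟨x, hx, _, _⟩
              exact hsend ⟨x, hx⟩
          · -- lab b
            have hb := (htr e).wlab j hjlt b hgl
            erw [hlab1 e] at hb
            by_cases hab : M.lab e = b
            · rw [if_pos hab] at hb
              rw [hdrop, hgl, Flab_a hab, hb]
              exact ihk'
            · rw [if_neg hab] at hb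
              rw [hdrop, hgl, Flab_b hab, hb]
  have wq : ∀ e (j : ℕ) (hj : j ≤ π'.length),
      wout e ⟨j, by omega⟩ = fO M ξ₁ (π'.drop j) e :=
    fun e j hj => wmain (fut e) e le_rfl π'.length j hj (by omega)
  -- forward pass: z components are forced
  have zmain : ∀ n e, past e ≤ n → ∀ (i : ℕ) (hi : i ≤ π.length),
      zout e ⟨i, by omega⟩ = lZ M ξ₁ π' (π.take i) e := by
    intro n
    induction n with
    | zero =>
      intro e he
      exact absurd he (by have := hpastpos e; omega)
    | succ n ihn =>
      intro e he i
      induction i with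
      | zero =>
        intro _
        have hb := (htr e).zbase
        rw [List.take_zero, Znil, hb, wq e 0 (by omega), List.drop_zero]
      | succ i ihi =>
        intro hi1
        have hilt : i < π.length := by omega
        have htake : π.take (i+1) = π.take i ++ [π.get ⟨i, hilt⟩] := take_succ_get π i hilt
        have ihi' : zout e ⟨i, by omega⟩ = lZ M ξ₁ π' (π.take i) e := ihi (by omega)
        rcases hgl : π.get ⟨i, hilt⟩ with _ | _ | ⟨r, s'⟩ | b
        · -- next
          by_cases hpred : ∃ x, M.next x e
          · obtain ⟨x, hx⟩ := hpred
            have hb := (htr e).znext_some i hilt hgl (zout x) (wout x) (hstate hx)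
            rw [htake, hgl, Znext_a hx, hb]
            exact ihn x (by have := hpastlt (Or.inl hx); omega) i (by omega)
          · have hb := (htr e).znext_none i hilt hgl (hiota e hpred)
            push_neg at hpred
            rw [htake, hgl, Znext_b hpred, hb]
        · -- nextStar
          rw [htake, hgl]
          by_cases hzb : lZ M ξ₁ π' (π.take i) e = ExtEv.bot
          · have hzi : zout e ⟨i, by omega⟩ = ExtEv.bot := by rw [ihi']; exact hzb
            by_cases hpred : ∃ x, M.next x e
            · obtain ⟨x, hx⟩ := hpred
              have hb := (htr e).zstar_some i hilt hgl hzi (zout x) (wout x) (hstate hx)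
              rw [Zstar_b hzb hx, hb]
              have hx' := ihn x (by have := hpastlt (Or.inl hx); omega) (i+1) (by omega)
              rw [htake, hgl] at hx'
              exact hx'
            · have hb := (htr e).zstar_none i hilt hgl hzi (hiota e hpred)
              push_neg at hpred
              rw [Zstar_c hzb hpred, hb]
          · have hb := (htr e).zstar_val i hilt hgl (by rw [ihi']; exact hzb)
            rw [Zstar_a hzb, hb]
            exact ihi'
        · -- msg r s'
          by_cases hrecv : ∃ x, M.msg x e
          · obtain ⟨x, hx⟩ := hrecv
            obtain ⟨m, hsx, hrx⟩ := hmsgr x e hx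
            have hb := (htr e).zmsg_recv i hilt r s' hgl _ m _ hrx
            have hm1 : m.1 = zout x := ((htr x).msgout _ m _ hsx).1
            by_cases hc : M.loc x = r ∧ M.loc e = s'
            · rw [if_pos hc] at hb
              rw [htake, hgl, Zmsg_a hx hc.1 hc.2, hb, hm1]
              exact ihn x (by have := hpastlt (Or.inr hx); omega) i (by omega)
            · rw [if_neg hc] at hb
              rw [htake, hgl, Zmsg_b, hb]
              rintro ⟨x', hx', h1, h2⟩
              have : x' = x := (M.msg_unique hx' hx (Or.inr (Or.inr (Or.inr rfl)))).1
              subst this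
              exact hc ⟨h1, h2⟩
          · have hb := (htr e).zmsg_other i hilt r s' hgl (hnot_recv e hrecv)
            rw [htake, hgl, Zmsg_b, hb]
            rintro ⟨x, hx, _, _⟩
            exact hrecv ⟨x, hx⟩
        · -- lab b
          have hb := (htr e).zlab i hilt b hgl
          erw [hlab1 e] at hb
          by_cases hab : M.lab e = b
          · rw [if_pos hab] at hb
            rw [htake, hgl, Zlab_a hab, hb]
            exact ihi'
          · rw [if_neg hab] at hb
            rw [htake, hgl, Zlab_b hab, hb]
  -- conclusion
  intro e hq
  have hqc := (htr e).qcheck hq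
  erw [hlabel e] at hqc
  have hz := zmain (past e) e le_rfl π.length le_rfl
  rw [List.take_length] at hz
  rw [← hz]
  exact hqc


/-! ### Completeness: the canonical run -/

lemma drop_cons_get {α : Type*} (l : List α) (j : ℕ) (h : j < l.length) :
    l.drop j = l.get ⟨j, h⟩ :: l.drop (j+1) := by
  rw [List.drop_eq_getElem_cons h]
  rfl

@[simp] lemma wvec_apply (M : MSC P A E) (ξ₁ : E → Θ) (e : E) (j : Fin (π'.length + 1)) :
    wvec Θ π' M ξ₁ e j = fO M ξ₁ (π'.drop j.val) e := rfl

@[simp] lemma zvec_apply (M : MSC P A E) (ξ₁ : E → Θ) (e : E) (i : Fin (π.length + 1)) :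
    zvec Θ π π' M ξ₁ e i = lZ M ξ₁ π' (π.take i.val) e := rfl

noncomputable def sInD (M : MSC P A E) (ξ₁ : E → Θ) (e : E) : StV Θ π π' :=
  if h : ∃ x, M.next x e then
    some (zvec Θ π π' M ξ₁ h.choose, wvec Θ π' M ξ₁ h.choose)
  else none

noncomputable def actD (M : MSC P A E) (ξ : E → Θ × ExtEv Θ) (ξ₁ : E → Θ) (e : E) :
    CAct P (A × (Θ × ExtEv Θ)) (SZV (P := P) (A := A) Θ π × SWV (P := P) (A := A) Θ π') :=
  if hs : ∃ f, M.msg e f then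
    CAct.send (M.lab e, ξ e) (zvec Θ π π' M ξ₁ e, wvec Θ π' M ξ₁ hs.choose) (M.loc hs.choose)
  else if hr : ∃ g, M.msg g e then
    CAct.recv (M.lab e, ξ e) (zvec Θ π π' M ξ₁ hr.choose, wvec Θ π' M ξ₁ e) (M.loc hr.choose)
  else CAct.internal (M.lab e, ξ e)

section RunLemmas

variable {M : MSC P A E} {ξ : E → Θ × ExtEv Θ} {ξ₁ : E → Θ}

lemma sInD_some {x e : E} (hx : M.next x e) :
    sInD Θ π π' M ξ₁ e = some (zvec Θ π π' M ξ₁ x, wvec Θ π' M ξ₁ x) := by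
  have hp : ∃ x', M.next x' e := ⟨x, hx⟩
  have hch : hp.choose = x := M.next_left_unique hp.choose_spec hx
  rw [sInD, dif_pos hp, hch]

lemma sInD_none {e : E} (h : ¬ ∃ x, M.next x e) : sInD Θ π π' M ξ₁ e = none := by
  rw [sInD, dif_neg h]

lemma sInD_some_elim {e : E} {z₀ : SZV (P := P) (A := A) Θ π} {w₀ : SWV (P := P) (A := A) Θ π'}
    (h : sInD Θ π π' M ξ₁ e = some (z₀, w₀)) :
    ∃ x, M.next x e ∧ z₀ = zvec Θ π π' M ξ₁ x ∧ w₀ = wvec Θ π' M ξ₁ x := by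
  by_cases hp : ∃ x, M.next x e
  · obtain ⟨x, hx⟩ := hp
    rw [sInD_some Θ π π' hx] at h
    have h' := Option.some.inj h
    refine ⟨x, hx, ?_, ?_⟩
    · exact (congrArg Prod.fst h').symm
    · exact (congrArg Prod.snd h').symm
  · rw [sInD_none Θ π π' hp] at h
    cases h

lemma actD_send {e f : E} (hf : M.msg e f) :
    actD Θ π π' M ξ ξ₁ e =
      CAct.send (M.lab e, ξ e) (zvec Θ π π' M ξ₁ e, wvec Θ π' M ξ₁ f) (M.loc f) := by
  have hs : ∃ f', M.msg e f' := ⟨f, hf⟩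
  have hch : hs.choose = f := (M.msg_unique hs.choose_spec hf (Or.inl rfl)).2
  rw [actD, dif_pos hs, hch]

lemma actD_recv {g e : E} (hg : M.msg g e) :
    actD Θ π π' M ξ ξ₁ e =
      CAct.recv (M.lab e, ξ e) (zvec Θ π π' M ξ₁ g, wvec Θ π' M ξ₁ e) (M.loc g) := by
  have hnos : ¬ ∃ f, M.msg e f := by
    rintro ⟨f, hf⟩
    exact not_send_of_recv M hg f hf
  have hr : ∃ g', M.msg g' e := ⟨g, hg⟩
  have hch : hr.choose = g := (M.msg_unique hr.choose_spec hg (Or.inr (Or.inr (Or.inr rfl)))).1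
  rw [actD, dif_neg hnos, dif_pos hr, hch]

lemma actD_int {e : E} (h1 : ¬ ∃ f, M.msg e f) (h2 : ¬ ∃ g, M.msg g e) :
    actD Θ π π' M ξ ξ₁ e = CAct.internal (M.lab e, ξ e) := by
  rw [actD, dif_neg h1, dif_neg h2]

lemma actD_labelOf (e : E) : (actD Θ π π' M ξ ξ₁ e).labelOf = (M.lab e, ξ e) := by
  rw [actD]
  split_ifs <;> rfl

lemma actD_not_send {e : E} (h : ¬ ∃ f, M.msg e f) :
    ∀ a' m t, actD Θ π π' M ξ ξ₁ e ≠ CAct.send a' m t := by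
  intro a' m t heq
  by_cases hr : ∃ g, M.msg g e
  · obtain ⟨g, hg⟩ := hr
    rw [actD_recv Θ π π' hg] at heq
    simp at heq
  · rw [actD_int Θ π π' h hr] at heq
    simp at heq

lemma actD_not_recv {e : E} (h : ¬ ∃ g, M.msg g e) :
    ∀ a' m t, actD Θ π π' M ξ ξ₁ e ≠ CAct.recv a' m t := by
  intro a' m t heq
  by_cases hs : ∃ f, M.msg e f
  · obtain ⟨f, hf⟩ := hs
    rw [actD_send Θ π π' hf] at heq
    simp at heq
  · rw [actD_int Θ π π' hs h] at heq
    simp at heq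

end RunLemmas


lemma main_complete {Θ : Type} [Fintype Θ] (q : P) (π π' : PathExpr P A) {E : Type}
    (M : MSC P A E) (ξ : E → Θ × ExtEv Θ)
    (hξ : ∀ e, M.loc e = q → (ξ e).2 = lZ M (fun g => (ξ g).1) π' π e) :
    AcceptsExt (theCFM Θ π π' q) M ξ := by
  classical
  haveI := M.fintypeE
  have hTrans : ∀ e, TransOK Θ π π' q (M.loc e) (sInD Θ π π' M (fun g => (ξ g).1) e)
      (actD Θ π π' M ξ (fun g => (ξ g).1) e) (zvec Θ π π' M (fun g => (ξ g).1) e)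
      (wvec Θ π' M (fun g => (ξ g).1) e) := by
    intro e
    refine { wbase := ?_, wlab := ?_, wmsg_send := ?_, wmsg_other := ?_, wnext_back := ?_,
             wstar_back := ?_, zbase := ?_, znext_some := ?_, znext_none := ?_, zlab := ?_,
             zmsg_recv := ?_, zmsg_other := ?_, zstar_val := ?_, zstar_some := ?_,
             zstar_none := ?_, msgout := ?_, msgin := ?_, qcheck := ?_ }
    · -- wbase
      simp only [wvec_apply, Fin.val_mk, actD_labelOf Θ π π']
      rw [List.drop_length, F0]
    · -- wlab
      intro j h b hget
      simp only [wvec_apply, Fin.val_mk, actD_labelOf Θ π π']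
      rw [drop_cons_get π' j h, hget]
      by_cases hab : M.lab e = b
      · rw [Flab_a hab, if_pos hab]
      · rw [Flab_b hab, if_neg hab]
    · -- wmsg_send
      intro j h r s' hget a' m t hacteq
      by_cases hs : ∃ f, M.msg e f
      · obtain ⟨f, hf⟩ := hs
        rw [actD_send Θ π π' hf] at hacteq
        injection hacteq with h1 h2 h3
        subst h1; subst h2; subst h3
        simp only [wvec_apply, Fin.val_mk]
        by_cases hc : M.loc e = r ∧ M.loc f = s'
        · rw [if_pos hc, drop_cons_get π' j h, hget, Fmsg_a hf hc.1 hc.2]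
        · rw [if_neg hc, drop_cons_get π' j h, hget, Fmsg_b]
          rintro ⟨x, hx, h1, h2⟩
          have hxe : x = f := (M.msg_unique hx hf (Or.inl rfl)).2
          subst hxe
          exact hc ⟨h1, h2⟩
      · exact absurd hacteq (actD_not_send Θ π π' hs a' m t)
    · -- wmsg_other
      intro j h r s' hget hnots
      have hs : ¬ ∃ f, M.msg e f := by
        rintro ⟨f, hf⟩
        exact hnots _ _ _ (actD_send Θ π π' hf)
      simp only [wvec_apply, Fin.val_mk]
      rw [drop_cons_get π' j h, hget, Fmsg_b]
      rintro ⟨x, hx, _, _⟩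
      exact hs ⟨x, hx⟩
    · -- wnext_back
      intro j h hget z₀ w₀ hseq
      obtain ⟨x, hx, rfl, rfl⟩ := sInD_some_elim Θ π π' hseq
      simp only [wvec_apply, Fin.val_mk]
      rw [drop_cons_get π' j h, hget, Fnext_a hx]
    · -- wstar_back
      intro j h hget z₀ w₀ hseq
      obtain ⟨x, hx, rfl, rfl⟩ := sInD_some_elim Θ π π' hseq
      simp only [wvec_apply, Fin.val_mk]
      rw [drop_cons_get π' j h, hget]
      rcases Option.eq_none_or_eq_some (fO M (fun g => (ξ g).1) (π'.drop (j+1)) x) with hfo | ⟨v, hfo⟩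
      · rw [Fstar_b hfo hx]; simp [hfo]
      · rw [Fstar_a hfo]; simp [hfo]
    · -- zbase
      simp only [zvec_apply, wvec_apply, Fin.val_mk]
      rw [List.take_zero, List.drop_zero, Znil]
    · -- znext_some
      intro i h hget z₀ w₀ hseq
      obtain ⟨x, hx, rfl, rfl⟩ := sInD_some_elim Θ π π' hseq
      simp only [zvec_apply, Fin.val_mk]
      rw [take_succ_get π i h, hget, Znext_a hx]
    · -- znext_none
      intro i h hget hseq
      have hp : ¬ ∃ x, M.next x e := by
        rintro ⟨x, hx⟩
        rw [sInD_some Θ π π' hx] at hseq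
        simp at hseq
      push_neg at hp
      simp only [zvec_apply, Fin.val_mk]
      rw [take_succ_get π i h, hget, Znext_b hp]
    · -- zlab
      intro i h b hget
      simp only [zvec_apply, Fin.val_mk, actD_labelOf Θ π π']
      rw [take_succ_get π i h, hget]
      by_cases hab : M.lab e = b
      · rw [Zlab_a hab, if_pos hab]
      · rw [Zlab_b hab, if_neg hab]
    · -- zmsg_recv
      intro i h r s' hget a' m t hacteq
      by_cases hr : ∃ g, M.msg g e
      · obtain ⟨g, hg⟩ := hr
        rw [actD_recv Θ π π' hg] at hacteq
        injection hacteq with h1 h2 h3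
        subst h1; subst h2; subst h3
        simp only [zvec_apply, Fin.val_mk]
        by_cases hc : M.loc g = r ∧ M.loc e = s'
        · rw [if_pos hc, take_succ_get π i h, hget, Zmsg_a hg hc.1 hc.2]
        · rw [if_neg hc, take_succ_get π i h, hget, Zmsg_b]
          rintro ⟨x', hx', h1, h2⟩
          have hxg : x' = g := (M.msg_unique hx' hg (Or.inr (Or.inr (Or.inr rfl)))).1
          subst hxg
          exact hc ⟨h1, h2⟩
      · exact absurd hacteq (actD_not_recv Θ π π' hr a' m t)
    · -- zmsg_other
      intro i h r s' hget hnots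
      have hr : ¬ ∃ g, M.msg g e := by
        rintro ⟨g, hg⟩
        exact hnots _ _ _ (actD_recv Θ π π' hg)
      simp only [zvec_apply, Fin.val_mk]
      rw [take_succ_get π i h, hget, Zmsg_b]
      rintro ⟨x, hx, _, _⟩
      exact hr ⟨x, hx⟩
    · -- zstar_val
      intro i h hget hne
      simp only [zvec_apply, Fin.val_mk] at hne ⊢
      rw [take_succ_get π i h, hget, Zstar_a hne]
    · -- zstar_some
      intro i h hget hzb z₀ w₀ hseq
      obtain ⟨x, hx, rfl, rfl⟩ := sInD_some_elim Θ π π' hseq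
      simp only [zvec_apply, Fin.val_mk] at hzb ⊢
      rw [take_succ_get π i h, hget, Zstar_b hzb hx]
    · -- zstar_none
      intro i h hget hzb hseq
      have hp : ¬ ∃ x, M.next x e := by
        rintro ⟨x, hx⟩
        rw [sInD_some Θ π π' hx] at hseq
        simp at hseq
      push_neg at hp
      simp only [zvec_apply, Fin.val_mk] at hzb ⊢
      rw [take_succ_get π i h, hget, Zstar_c hzb hp]
    · -- msgout
      intro a' m t hacteq
      by_cases hs : ∃ f, M.msg e f
      · obtain ⟨f, hf⟩ := hs
        rw [actD_send Θ π π' hf] at hacteq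
        injection hacteq with h1 h2 h3
        subst h1; subst h2; subst h3
        refine ⟨rfl, ?_⟩
        intro heq
        exact M.msg_loc hf heq.symm
      · exact absurd hacteq (actD_not_send Θ π π' hs a' m t)
    · -- msgin
      intro a' m t hacteq
      by_cases hr : ∃ g, M.msg g e
      · obtain ⟨g, hg⟩ := hr
        rw [actD_recv Θ π π' hg] at hacteq
        injection hacteq with h1 h2 h3
        subst h1; subst h2; subst h3
        refine ⟨rfl, ?_⟩
        intro heq
        exact M.msg_loc hg heq
      · exact absurd hacteq (actD_not_recv Θ π π' hr a' m t)
    · -- qcheck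
      intro hpr
      simp only [zvec_apply, Fin.val_mk, actD_labelOf Θ π π']
      rw [List.take_length]
      exact hξ e hpr
  refine ⟨fun e => (sInD Θ π π' M (fun g => (ξ g).1) e, actD Θ π π' M ξ (fun g => (ξ g).1) e,
    some (zvec Θ π π' M (fun g => (ξ g).1) e, wvec Θ π' M (fun g => (ξ g).1) e)),
    ⟨?_, ?_, ?_, ?_, ?_, ?_⟩, ?_⟩
  · intro e
    exact ⟨zvec Θ π π' M (fun g => (ξ g).1) e, wvec Θ π' M (fun g => (ξ g).1) e, rfl, hTrans e⟩
  · intro e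
    exact actD_labelOf Θ π π' e
  · intro e h
    exact sInD_none Θ π π' h
  · intro e f hef
    exact (sInD_some Θ π π' hef).symm
  · intro e h1 h2
    exact ⟨(M.lab e, ξ e), actD_int Θ π π' h1 h2⟩
  · intro e f hef
    exact ⟨(zvec Θ π π' M (fun g => (ξ g).1) e, wvec Θ π' M (fun g => (ξ g).1) f),
      actD_send Θ π π' hef, actD_recv Θ π π' hef⟩
  · refine ⟨fun pr => if h : ∃ e, M.loc e = pr then
        some (zvec Θ π π' M (fun g => (ξ g).1) (exists_final M pr h).choose,
              wvec Θ π' M (fun g => (ξ g).1) (exists_final M pr h).choose) else none, ?_, ?_⟩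
    · intro pr
      by_cases h : ∃ e, M.loc e = pr
      · right
        refine ⟨_, dif_pos h, ?_⟩
        have hnos := (exists_final M pr h).choose_spec.2
        intro j hjlt
        constructor
        · intro hget
          simp only [wvec_apply, Fin.val_mk]
          rw [drop_cons_get π' j hjlt, hget, Fnext_b hnos]
        · intro hget
          simp only [wvec_apply, Fin.val_mk]
          rw [drop_cons_get π' j hjlt, hget]
          rcases hfo : fO M (fun g => (ξ g).1) (π'.drop (j+1)) (exists_final M pr h).choose
            with _ | v
          · rw [Fstar_c hfo hnos]
          · rw [Fstar_a hfo]
      · left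
        exact dif_neg h
    · intro pr
      constructor
      · intro hex
        have hex' : ∃ e, M.loc e = pr := hex
        refine ⟨(exists_final M pr hex').choose, (exists_final M pr hex').choose_spec.1, ?_, ?_⟩
        · rintro ⟨f, hf⟩
          exact (exists_final M pr hex').choose_spec.2 f hf
        · dsimp only
          exact dif_pos hex'
      · intro hnex
        have hnex' : ¬ ∃ e, M.loc e = pr := hnex
        dsimp only
        exact dif_neg hnex'


end Stmt14


open Gossip in
/-- Lemma 6: for `π, π' ∈ Π_{p,q}`, there is a CFM recognizing
exactly the extended MSCs `(M, ξ)` with `ξ(e) = (ξ₁(e), ξ₂(e))` such that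
`ξ₂(e) = ξ₁(f_{π,π'}(e))` for all `e ∈ E_q` (with `ξ₁(⊥) = ⊥`, `ξ₁(⊤) = ⊤`). -/
theorem stmt14 {P A : Type} [Fintype P] [Fintype A] (Θ : Type) [Fintype Θ]
    (p q : P) (π π' : PathExpr P A)
    (hπ : pcomp π p q) (hπ' : pcomp π' p q) :
    ∃ C : CFM P (A × (Θ × ExtEv Θ)),
      ∀ (E : Type) (M : MSC P A E) (ξ : E → Θ × ExtEv Θ),
        AcceptsExt C M ξ ↔
          ∀ e : E, M.loc e = q → ∀ x : ExtEv E, IsFa M π π' e x →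
            (ξ e).2 = extMap (fun g => (ξ g).1) x := by
  classical
  refine ⟨Stmt14.theCFM Θ π π' q, ?_⟩
  intro E M ξ
  constructor
  · intro hacc e hq x hx
    rw [Stmt14.bridge M (fun g => (ξ g).1) hx]
    exact Stmt14.main_sound q π π' M ξ hacc e hq
  · intro hΦ
    apply Stmt14.main_complete q π π' M ξ
    intro e hq
    obtain ⟨x, hx⟩ := Stmt14.isFa_exists π π' M e
    rw [hΦ e hq x hx, Stmt14.bridge M (fun g => (ξ g).1) hx]
end
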